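/- arXiv:2210.00564 — 11 statements merged into one kernel-verified Lean document; each statement's English description precedes it below -/
import Mathlib

section
/- Let (Ω, F, (F_n)_{n≥0}, P) be a filtered probability space and p ∈ (0,1). Let (X̂_n)_{n≥1} be real-valued random variables such that X̂_n is F_n-measurable and integrable for every n ≥ 1, set Ŝ_0 = 0 and Ŝ_n = X̂_1 + ⋯ + X̂_n. Assume E[X̂_1 | F_0] = 0 a.s. and, for every n ≥ 1, E[X̂_{n+1} | F_n] = (p/n)·Ŝ_n a.s. Then the process M defined by M_0 = 0 and M_n = a_n·Ŝ_n for n ≥ 1, where a_n := ∏_{k=1}^{n-1} k/(k+p) (so a_1 = 1), is a martingale with respect to the filtration (F_n). -/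
open MeasureTheory Finset

/-- The martingale associated with a noise reinforced random walk:
if `E[X₁ | 𝓕₀] = 0` and `E[X_{n+1} | 𝓕ₙ] = (p/n) Ŝₙ` for all `n ≥ 1`,
then `Mₙ = aₙ Ŝₙ` with `aₙ = ∏_{k=1}^{n-1} k/(k+p)` is a martingale. -/
theorem reinforced_walk_martingale
    {Ω : Type*} {m : MeasurableSpace Ω} {μ : Measure Ω} [IsProbabilityMeasure μ]
    (𝓕 : Filtration ℕ m) (p : ℝ) (hp0 : 0 < p) (hp1 : p < 1)
    (X : ℕ → Ω → ℝ)
    (hmeas : ∀ n, 1 ≤ n → StronglyMeasurable[𝓕 n] (X n))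
    (hint : ∀ n, 1 ≤ n → Integrable (X n) μ)
    (S : ℕ → Ω → ℝ)
    (hS : ∀ n ω, S n ω = ∑ k ∈ Finset.Icc 1 n, X k ω)
    (h0 : μ[X 1 | 𝓕 0] =ᵐ[μ] 0)
    (hcond : ∀ n, 1 ≤ n → μ[X (n + 1) | 𝓕 n] =ᵐ[μ] fun ω => (p / n) * S n ω)
    (a : ℕ → ℝ)
    (ha : ∀ n, a n = ∏ k ∈ Finset.Icc 1 (n - 1), (k : ℝ) / ((k : ℝ) + p))
    (M : ℕ → Ω → ℝ)
    (hM : ∀ n ω, M n ω = a n * S n ω) :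
    Martingale M 𝓕 μ := by
  have hSfun : ∀ n, S n = fun ω => ∑ k ∈ Finset.Icc 1 n, X k ω := fun n => funext (hS n)
  have hSmeas : ∀ n, StronglyMeasurable[𝓕 n] (S n) := by
    intro n
    rw [hSfun]
    exact Finset.stronglyMeasurable_fun_sum _ fun k hk =>
      (hmeas k (Finset.mem_Icc.mp hk).1).mono (𝓕.mono (Finset.mem_Icc.mp hk).2)
  have hSint : ∀ n, Integrable (S n) μ := by
    intro n
    rw [hSfun]
    exact integrable_finset_sum _ fun k hk => hint k (Finset.mem_Icc.mp hk).1
  have hMeq : ∀ n, M n = fun ω => a n * S n ω := fun n => funext (hM n)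
  have hMmeas : ∀ n, StronglyMeasurable[𝓕 n] (M n) := fun n => by
    rw [hMeq]; exact (hSmeas n).const_mul _
  have hMint : ∀ n, Integrable (M n) μ := fun n => by
    rw [hMeq]; exact (hSint n).const_mul _
  refine martingale_nat hMmeas hMint ?_
  intro n
  have hSucc : S (n + 1) = fun ω => S n ω + X (n + 1) ω := by
    funext ω
    rw [hS, hS, Finset.sum_Icc_succ_top (by omega : 1 ≤ n + 1)]
  have hcm : ∀ (c : ℝ) (f : Ω → ℝ),
      μ[fun ω => c * f ω|𝓕 n] =ᵐ[μ] fun ω => c * (μ[f|𝓕 n]) ω := by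
    intro c f
    simpa [smul_eq_mul, Pi.smul_def] using condExp_smul (μ := μ) (m := 𝓕 n) c f
  have hMsucc : M (n + 1) =
      (fun ω => a (n + 1) * S n ω) + (fun ω => a (n + 1) * X (n + 1) ω) := by
    funext ω
    simp only [Pi.add_apply, hM, hSucc]
    ring
  have key : μ[M (n + 1)|𝓕 n] =ᵐ[μ]
      fun ω => a (n + 1) * S n ω + a (n + 1) * (μ[X (n + 1)|𝓕 n]) ω := by
    rw [hMsucc]
    refine (condExp_add ((hSint n).const_mul _) ((hint (n + 1) (by omega)).const_mul _) (𝓕 n)).trans ?_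
    have e1 : μ[fun ω => a (n + 1) * S n ω|𝓕 n] = fun ω => a (n + 1) * S n ω :=
      condExp_of_stronglyMeasurable (𝓕.le n) ((hSmeas n).const_mul _) ((hSint n).const_mul _)
    rw [e1]
    filter_upwards [hcm (a (n + 1)) (X (n + 1))] with ω h2
    simp only [Pi.add_apply, h2]
  rcases Nat.eq_zero_or_pos n with hn | hn
  · subst hn
    have hS0 : ∀ ω, S 0 ω = 0 := by intro ω; simp [hS]
    filter_upwards [key, h0] with ω hk h0'
    rw [hM, hk, h0', hS0]
    simp
  · have hnR : (0:ℝ) < (n : ℝ) := by exact_mod_cast hn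
    have hnpR : (0:ℝ) < (n : ℝ) + p := by linarith
    have harec : a (n + 1) = a n * ((n : ℝ) / ((n : ℝ) + p)) := by
      rw [ha, ha]
      have h1 : n + 1 - 1 = (n - 1) + 1 := by omega
      rw [h1, Finset.prod_Icc_succ_top (by omega : 1 ≤ (n - 1) + 1)]
      have h2 : n - 1 + 1 = n := by omega
      rw [h2]
    have hkey : ∀ s : ℝ, a (n + 1) * s + a (n + 1) * (p / (n : ℝ) * s) = a n * s := by
      intro s
      rw [harec]
      field_simp
    filter_upwards [key, hcond n hn] with ω hk hc
    rw [hM, hk, hc]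
    exact (hkey (S n ω)).symm
end

section
/- Let (Ω, F, (F_n)_{n≥0}, P) be a filtered probability space and p ∈ (0,1). Let (X̂_n)_{n≥1} be square-integrable real random variables with X̂_n F_n-measurable, set Ŝ_0 = 0, Ŝ_n = X̂_1 + ⋯ + X̂_n and V̂_n = X̂_1² + ⋯ + X̂_n². Assume there is a constant σ² ≥ 0 with E[X̂_1 | F_0] = 0 a.s., E[X̂_1² | F_0] = σ² a.s., and for every n ≥ 1: E[X̂_{n+1} | F_n] = (p/n)·Ŝ_n a.s. and E[X̂_{n+1}² | F_n] = (1−p)σ² + (p/n)·V̂_n a.s. Let M_0 = 0 and M_n = a_n·Ŝ_n with a_n := ∏_{k=1}^{n-1} k/(k+p). Then almost surely, for every n ≥ 1, ∑_{k=1}^n E[(M_k − M_{k-1})² | F_{k-1}] = σ² + ∑_{k=2}^n a_k²·( (1−p)σ² − p²·Ŝ_{k-1}²/(k−1)² + p·V̂_{k-1}/(k−1) ), where the sum over k from 2 to n is empty (hence zero) when n = 1. -/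
open MeasureTheory Finset

/-- Product of two L² functions is integrable. -/
lemma l2_mul_integrable {Ω : Type*} {m : MeasurableSpace Ω} {μ : Measure Ω}
    {f g : Ω → ℝ} (hf : MemLp f 2 μ) (hg : MemLp g 2 μ) :
    Integrable (fun ω => f ω * g ω) μ := by
  refine Integrable.mono' (hf.integrable_sq.add hg.integrable_sq)
    (hf.aestronglyMeasurable.mul hg.aestronglyMeasurable) ?_
  filter_upwards with ω
  have h : |f ω| * |g ω| ≤ f ω ^ 2 + g ω ^ 2 := by
    nlinarith [sq_nonneg (|f ω| - |g ω|), abs_nonneg (f ω), abs_nonneg (g ω),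
      sq_abs (f ω), sq_abs (g ω)]
  simpa using h

/-- The predictable quadratic variation of the martingale `Mₙ = aₙ Ŝₙ` associated with a
noise reinforced random walk with memory parameter `p` and centred, square-integrable
typical step of variance `σ²`. -/
theorem reinforced_walk_quadratic_variation
    {Ω : Type*} {m : MeasurableSpace Ω} {μ : Measure Ω} [IsProbabilityMeasure μ]
    (𝓕 : Filtration ℕ m) (p : ℝ) (hp0 : 0 < p) (hp1 : p < 1)
    (X : ℕ → Ω → ℝ)
    (hmeas : ∀ n, 1 ≤ n → StronglyMeasurable[𝓕 n] (X n))
    (hL2 : ∀ n, 1 ≤ n → MemLp (X n) 2 μ)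
    (S V : ℕ → Ω → ℝ)
    (hS : ∀ n ω, S n ω = ∑ k ∈ Finset.Icc 1 n, X k ω)
    (hV : ∀ n ω, V n ω = ∑ k ∈ Finset.Icc 1 n, (X k ω) ^ 2)
    (σ2 : ℝ) (hσ2 : 0 ≤ σ2)
    (h0 : μ[X 1 | 𝓕 0] =ᵐ[μ] 0)
    (h0sq : μ[(fun ω => (X 1 ω) ^ 2) | 𝓕 0] =ᵐ[μ] fun _ => σ2)
    (hcond : ∀ n, 1 ≤ n → μ[X (n + 1) | 𝓕 n] =ᵐ[μ] fun ω => (p / n) * S n ω)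
    (hcondsq : ∀ n, 1 ≤ n →
      μ[(fun ω => (X (n + 1) ω) ^ 2) | 𝓕 n] =ᵐ[μ]
        fun ω => (1 - p) * σ2 + (p / n) * V n ω)
    (a : ℕ → ℝ)
    (ha : ∀ n, a n = ∏ k ∈ Finset.Icc 1 (n - 1), (k : ℝ) / ((k : ℝ) + p))
    (M : ℕ → Ω → ℝ)
    (hM : ∀ n ω, M n ω = a n * S n ω) :
    ∀ᵐ ω ∂μ, ∀ n, 1 ≤ n →
      ∑ k ∈ Finset.Icc 1 n, (μ[(fun ω' => (M k ω' - M (k - 1) ω') ^ 2) | 𝓕 (k - 1)]) ω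
        = σ2 + ∑ k ∈ Finset.Icc 2 n,
            (a k) ^ 2 * ((1 - p) * σ2 - p ^ 2 * (S (k - 1) ω) ^ 2 / ((k : ℝ) - 1) ^ 2
              + p * V (k - 1) ω / ((k : ℝ) - 1)) := by
  -- measurability and integrability of partial sums
  have hSfun : ∀ n, S n = fun ω => ∑ k ∈ Finset.Icc 1 n, X k ω := fun n => funext (hS n)
  have hSmeas : ∀ n, StronglyMeasurable[𝓕 n] (S n) := by
    intro n
    rw [hSfun n]
    refine Finset.stronglyMeasurable_fun_sum _ fun k hk => ?_
    exact (hmeas k (Finset.mem_Icc.1 hk).1).mono (𝓕.mono (Finset.mem_Icc.1 hk).2)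
  have hSL2 : ∀ n, MemLp (S n) 2 μ := by
    intro n
    rw [hSfun n]
    exact memLp_finset_sum _ fun k hk => hL2 k (Finset.mem_Icc.1 hk).1
  -- the first conditional expectation equals σ²
  have hae1 : μ[(fun ω' => (M 1 ω' - M (1 - 1) ω') ^ 2) | 𝓕 (1 - 1)] =ᵐ[μ] fun _ => σ2 := by
    have hfun : (fun ω' => (M 1 ω' - M (1 - 1) ω') ^ 2) = fun ω => (X 1 ω) ^ 2 := by
      funext ω
      have h1 : S 1 ω = X 1 ω := by rw [hS]; simp
      have h0' : S 0 ω = 0 := by rw [hS]; simp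
      have ha1 : a 1 = 1 := by rw [ha]; simp
      simp [hM, h1, h0', ha1]
    rw [hfun]
    exact h0sq
  -- the conditional expectations for k = m + 2
  have hae2 : ∀ m : ℕ,
      μ[(fun ω' => (M (m + 2) ω' - M (m + 1) ω') ^ 2) | 𝓕 (m + 1)] =ᵐ[μ]
        fun ω => (a (m + 2)) ^ 2 * ((1 - p) * σ2
          - p ^ 2 * (S (m + 1) ω) ^ 2 / (((m + 2 : ℕ) : ℝ) - 1) ^ 2
          + p * V (m + 1) ω / (((m + 2 : ℕ) : ℝ) - 1)) := by
    intro m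
    have hm1 : (1 : ℕ) ≤ m + 1 := by omega
    set nr : ℝ := ((m + 1 : ℕ) : ℝ) with hnr_def
    have hnr0 : 0 < nr := by positivity
    have hnr : nr ≠ 0 := ne_of_gt hnr0
    have hnrp : nr + p ≠ 0 := by positivity
    -- recursion for a
    have harec : a (m + 1) * nr = a (m + 2) * (nr + p) := by
      have e : a (m + 2) = a (m + 1) * (nr / (nr + p)) := by
        rw [ha (m + 2), ha (m + 1)]
        rw [show m + 2 - 1 = m + 1 from rfl, show m + 1 - 1 = m from rfl,
          Finset.prod_Icc_succ_top hm1]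
      rw [e]
      field_simp
    -- the increment
    have hdiff : ∀ ω, M (m + 2) ω - M (m + 1) ω
        = a (m + 2) * (X (m + 2) ω - (p / nr) * S (m + 1) ω) := by
      intro ω
      have hSsucc : S (m + 2) ω = S (m + 1) ω + X (m + 2) ω := by
        rw [hS, hS, Finset.sum_Icc_succ_top (by omega : 1 ≤ m + 2)]
      rw [hM, hM, hSsucc]
      field_simp
      linear_combination (-(S (m + 1) ω)) * harec
    set A : ℝ := (a (m + 2)) ^ 2 with hA
    set B : ℝ := (-2) * (a (m + 2)) ^ 2 * (p / nr) with hB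
    set C : ℝ := (a (m + 2)) ^ 2 * (p / nr) ^ 2 with hC
    set f1 : Ω → ℝ := fun ω => (X (m + 2) ω) ^ 2 with hf1
    set f2 : Ω → ℝ := fun ω => S (m + 1) ω * X (m + 2) ω with hf2
    set f3 : Ω → ℝ := fun ω => (S (m + 1) ω) ^ 2 with hf3
    have i1 : Integrable f1 μ := (hL2 (m + 2) (by omega)).integrable_sq
    have i2 : Integrable f2 μ := l2_mul_integrable (hSL2 (m + 1)) (hL2 (m + 2) (by omega))
    have i3 : Integrable f3 μ := (hSL2 (m + 1)).integrable_sq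
    have funeq : (fun ω' => (M (m + 2) ω' - M (m + 1) ω') ^ 2)
        = A • f1 + (B • f2 + C • f3) := by
      funext ω
      simp only [Pi.add_apply, Pi.smul_apply, smul_eq_mul, hf1, hf2, hf3, hA, hB, hC]
      rw [hdiff ω]
      ring
    -- conditional expectations of the three pieces
    have c1 : μ[f1 | 𝓕 (m + 1)] =ᵐ[μ] fun ω => (1 - p) * σ2 + (p / nr) * V (m + 1) ω := by
      have := hcondsq (m + 1) hm1
      simpa [hf1, hnr_def] using this
    have c2 : μ[f2 | 𝓕 (m + 1)] =ᵐ[μ] fun ω => (p / nr) * (S (m + 1) ω) ^ 2 := by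
      have hmul : μ[S (m + 1) * X (m + 2) | 𝓕 (m + 1)]
          =ᵐ[μ] S (m + 1) * μ[X (m + 2) | 𝓕 (m + 1)] :=
        condExp_mul_of_stronglyMeasurable_left (hSmeas (m + 1)) i2
          ((hL2 (m + 2) (by omega)).integrable one_le_two)
      refine hmul.trans ?_
      filter_upwards [hcond (m + 1) hm1] with ω hω
      simp only [Pi.mul_apply, hω, hnr_def]
      ring
    have c3 : μ[f3 | 𝓕 (m + 1)] = f3 :=
      condExp_of_stronglyMeasurable (𝓕.le (m + 1)) ((hSmeas (m + 1)).pow 2) i3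
    -- linearity
    have E1 : μ[A • f1 + (B • f2 + C • f3) | 𝓕 (m + 1)]
        =ᵐ[μ] A • μ[f1 | 𝓕 (m + 1)] + (B • μ[f2 | 𝓕 (m + 1)] + C • μ[f3 | 𝓕 (m + 1)]) := by
      refine (condExp_add (i1.smul A) ((i2.smul B).add (i3.smul C)) _).trans ?_
      refine Filter.EventuallyEq.add (condExp_smul A f1 _) ?_
      refine (condExp_add (i2.smul B) (i3.smul C) _).trans ?_
      exact Filter.EventuallyEq.add (condExp_smul B f2 _) (condExp_smul C f3 _)
    rw [funeq]
    refine E1.trans ?_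
    filter_upwards [c1, c2] with ω h1 h2
    rw [c3]
    simp only [Pi.add_apply, Pi.smul_apply, smul_eq_mul, h1, h2, c3, hf3, hA, hB, hC]
    have hcast : ((m + 2 : ℕ) : ℝ) - 1 = nr := by push_cast [hnr_def]; ring
    rw [hcast]
    field_simp
    ring
  -- combine
  filter_upwards [hae1, ae_all_iff.2 hae2] with ω hω1 hω2
  intro n hn
  have hsplit : Finset.Icc 1 n = insert 1 (Finset.Icc 2 n) := by
    ext x; simp only [Finset.mem_Icc, Finset.mem_insert]; omega
  rw [hsplit, Finset.sum_insert (by simp)]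
  rw [hω1]
  congr 1
  refine Finset.sum_congr rfl fun k hk => ?_
  obtain ⟨hk2, -⟩ := Finset.mem_Icc.1 hk
  obtain ⟨mm, rfl⟩ : ∃ mm, k = mm + 2 := ⟨k - 2, by omega⟩
  exact hω2 mm
end

section
/- Let 0 < p < 1/2. The covariance function of noise reinforced Brownian motion is positive semidefinite: for every n ≥ 1, all times t_1, …, t_n ∈ [0,∞) and all real numbers c_1, …, c_n, one has ∑_{i=1}^n ∑_{j=1}^n c_i c_j · (max(t_i,t_j))^p · (min(t_i,t_j))^{1−p} / (1−2p) ≥ 0 (with the convention that the summand vanishes when min(t_i,t_j) = 0). -/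
open Finset

/-- Key lemma: kernels of the form `m (min (t i) (t j))` with `m` monotone on the
nonnegative reals and nonnegative on the relevant values are positive semidefinite. -/
lemma min_kernel_posSemidef {ι : Type*} [DecidableEq ι] (t d : ι → ℝ) :
    ∀ (s : Finset ι) (m : ℝ → ℝ),
      (∀ a b : ℝ, 0 ≤ a → a ≤ b → m a ≤ m b) →
      (∀ i ∈ s, 0 ≤ t i) → (∀ i ∈ s, 0 ≤ m (t i)) →
      0 ≤ ∑ i ∈ s, ∑ j ∈ s, d i * d j * m (min (t i) (t j)) := by
  intro s
  induction s using Finset.strongInduction with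
  | _ s ih =>
    intro m hm ht hmt
    rcases s.eq_empty_or_nonempty with rfl | hs
    · simp
    obtain ⟨k, hk, hkmin⟩ := s.exists_min_image t hs
    -- reduce the "remainder" kernel to the erased set
    have h1 : ∀ i ∈ s, ∑ j ∈ s, d i * d j * (m (min (t i) (t j)) - m (t k))
        = ∑ j ∈ s.erase k, d i * d j * (m (min (t i) (t j)) - m (t k)) := by
      intro i hi
      refine (Finset.sum_erase s ?_).symm
      rw [min_eq_right (hkmin i hi), sub_self, mul_zero]
    have h2 : ∑ i ∈ s, ∑ j ∈ s.erase k, d i * d j * (m (min (t i) (t j)) - m (t k))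
        = ∑ i ∈ s.erase k, ∑ j ∈ s.erase k, d i * d j * (m (min (t i) (t j)) - m (t k)) := by
      refine (Finset.sum_erase s ?_).symm
      refine Finset.sum_eq_zero fun j hj => ?_
      rw [min_eq_left (hkmin j (Finset.mem_of_mem_erase hj)), sub_self, mul_zero]
    have key_eq : ∑ i ∈ s, ∑ j ∈ s, d i * d j * m (min (t i) (t j))
        = (∑ i ∈ s, d i) * (∑ j ∈ s, d j) * m (t k)
          + ∑ i ∈ s.erase k, ∑ j ∈ s.erase k, d i * d j * (m (min (t i) (t j)) - m (t k)) := by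
      have split : ∑ i ∈ s, ∑ j ∈ s, d i * d j * m (min (t i) (t j))
          = ∑ i ∈ s, ∑ j ∈ s, (d i * d j * m (t k)
              + d i * d j * (m (min (t i) (t j)) - m (t k))) := by
        refine Finset.sum_congr rfl fun i _ => Finset.sum_congr rfl fun j _ => ?_
        ring
      rw [split]
      have : ∑ i ∈ s, ∑ j ∈ s, (d i * d j * m (t k)
              + d i * d j * (m (min (t i) (t j)) - m (t k)))
          = (∑ i ∈ s, ∑ j ∈ s, d i * d j * m (t k))
            + ∑ i ∈ s, ∑ j ∈ s, d i * d j * (m (min (t i) (t j)) - m (t k)) := by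
        simp [Finset.sum_add_distrib]
      rw [this]
      congr 1
      · rw [Finset.sum_mul_sum, Finset.sum_mul]
        refine Finset.sum_congr rfl fun i _ => ?_
        rw [Finset.sum_mul]
      · rw [← h2]
        exact Finset.sum_congr rfl h1
    rw [key_eq]
    have first : 0 ≤ (∑ i ∈ s, d i) * (∑ j ∈ s, d j) * m (t k) :=
      mul_nonneg (mul_self_nonneg _) (hmt k hk)
    have second : 0 ≤ ∑ i ∈ s.erase k, ∑ j ∈ s.erase k,
        d i * d j * (m (min (t i) (t j)) - m (t k)) := by
      refine ih (s.erase k) (Finset.erase_ssubset hk) (fun x => m x - m (t k)) ?_ ?_ ?_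
      · intro a b ha hab
        exact sub_le_sub_right (hm a b ha hab) _
      · intro i hi
        exact ht i (Finset.mem_of_mem_erase hi)
      · intro i hi
        have := hm (t k) (t i) (ht k hk) (hkmin i (Finset.mem_of_mem_erase hi))
        linarith
    linarith

/-- The covariance kernel `(t ∨ s)^p (t ∧ s)^{1-p} / (1-2p)` of noise reinforced Brownian
motion with reinforcement parameter `p ∈ (0, 1/2)` is positive semidefinite.
Powers are real powers (`Real.rpow`), so the summand vanishes when `min (t i) (t j) = 0`. -/
theorem nrbm_covariance_posSemidef (p : ℝ) (hp0 : 0 < p) (hp2 : p < 1 / 2)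
    (n : ℕ) (hn : 1 ≤ n) (t : Fin n → ℝ) (ht : ∀ i, 0 ≤ t i) (c : Fin n → ℝ) :
    0 ≤ ∑ i, ∑ j, c i * c j *
      ((max (t i) (t j)) ^ p * (min (t i) (t j)) ^ (1 - p) / (1 - 2 * p)) := by
  have h2p : (0:ℝ) < 1 - 2 * p := by linarith
  have helper : ∀ a b : ℝ, 0 ≤ a → 0 ≤ b →
      a ^ p * b ^ p * (min a b) ^ (1 - 2 * p) = (max a b) ^ p * (min a b) ^ (1 - p) := by
    have aux : ∀ a b : ℝ, 0 ≤ a → a ≤ b →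
        a ^ p * b ^ p * (min a b) ^ (1 - 2 * p) = (max a b) ^ p * (min a b) ^ (1 - p) := by
      intro a b ha hab
      rw [min_eq_left hab, max_eq_right hab]
      have he : (1:ℝ) - p = p + (1 - 2 * p) := by ring
      have : a ^ ((1:ℝ) - p) = a ^ p * a ^ (1 - 2 * p) := by
        rw [he, Real.rpow_add' ha (by rw [← he]; intro h; nlinarith)]
      rw [this]; ring
    intro a b ha hb
    rcases le_total a b with hab | hab
    · exact aux a b ha hab
    · rw [min_comm, max_comm]
      have := aux b a hb hab
      linarith [this]
  have := min_kernel_posSemidef t (fun i => c i * t i ^ p) Finset.univ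
    (fun x => x ^ (1 - 2 * p) / (1 - 2 * p))
    (fun a b ha hab => by
      apply div_le_div_of_nonneg_right ?_ h2p.le
      exact Real.rpow_le_rpow ha hab (le_of_lt h2p))
    (fun i _ => ht i)
    (fun i _ => div_nonneg (Real.rpow_nonneg (ht i) _) (le_of_lt h2p))
  calc (0:ℝ) ≤ ∑ i, ∑ j, (c i * t i ^ p) * (c j * t j ^ p)
        * ((min (t i) (t j)) ^ (1 - 2 * p) / (1 - 2 * p)) := this
    _ = ∑ i, ∑ j, c i * c j *
        ((max (t i) (t j)) ^ p * (min (t i) (t j)) ^ (1 - p) / (1 - 2 * p)) := by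
        refine Finset.sum_congr rfl fun i _ => Finset.sum_congr rfl fun j _ => ?_
        rw [← helper (t i) (t j) (ht i) (ht j)]
        ring
end

section
/- Let 0 < p < 1/2. Define K : ({0,1} × [0,∞))² → ℝ by K((0,t),(0,s)) = min(t,s), K((0,t),(1,s)) = (min(t,s))^{1−p}·s^p, K((1,t),(0,s)) = (min(t,s))^{1−p}·t^p, and K((1,t),(1,s)) = (max(t,s))^p·(min(t,s))^{1−p}/(1−2p). Then K is positive semidefinite: for every n ≥ 1, all points (ε_1,t_1), …, (ε_n,t_n) in {0,1} × [0,∞) and all real numbers c_1, …, c_n, one has ∑_{i=1}^n ∑_{j=1}^n c_i c_j K((ε_i,t_i),(ε_j,t_j)) ≥ 0. -/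
/-- The joint covariance kernel of a Brownian motion (label `false`) together with its noise
reinforced version (label `true`) with reinforcement parameter `p`.
Powers are real powers (`Real.rpow`). -/
noncomputable def jointBMCov (p : ℝ) : Bool × ℝ → Bool × ℝ → ℝ
  | (false, t), (false, s) => min t s
  | (false, t), (true, s) => (min t s) ^ (1 - p) * s ^ p
  | (true, t), (false, s) => (min t s) ^ (1 - p) * t ^ p
  | (true, t), (true, s) => (max t s) ^ p * (min t s) ^ (1 - p) / (1 - 2 * p)

lemma jointBMCov_indicator_rpow_integral {r m : ℝ} (hr : r < 1) (hm : 0 ≤ m) :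
    ∫ u, (Set.Ioc (0:ℝ) m).indicator (fun u => u ^ (-r)) u = m ^ (1 - r) / (1 - r) := by
  rw [MeasureTheory.integral_indicator measurableSet_Ioc,
    ← intervalIntegral.integral_of_le hm, integral_rpow (Or.inl (by linarith)),
    Real.zero_rpow (by linarith), show -r + 1 = 1 - r from by ring]
  ring

lemma jointBMCov_indicator_rpow_integrable {r m : ℝ} (hr : r < 1) (hm : 0 ≤ m) :
    MeasureTheory.Integrable ((Set.Ioc (0:ℝ) m).indicator (fun u => u ^ (-r))) := by
  rw [MeasureTheory.integrable_indicator_iff measurableSet_Ioc]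
  have h := intervalIntegral.intervalIntegrable_rpow' (a := 0) (b := m) (r := -r) (by linarith)
  rw [intervalIntegrable_iff_integrableOn_Ioc_of_le hm] at h
  exact h

/-- The joint covariance kernel of a Brownian motion and its noise reinforced version with
reinforcement parameter `p ∈ (0, 1/2)` is positive semidefinite. -/
theorem joint_bm_nrbm_cov_posSemidef (p : ℝ) (hp0 : 0 < p) (hp2 : p < 1 / 2)
    (n : ℕ) (hn : 1 ≤ n) (ε : Fin n → Bool) (t : Fin n → ℝ) (ht : ∀ i, 0 ≤ t i)
    (c : Fin n → ℝ) :
    0 ≤ ∑ i, ∑ j, c i * c j * jointBMCov p (ε i, t i) (ε j, t j) := by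
  classical
  set q : Bool → ℝ := fun e => if e then p else 0 with hq
  set α : Fin n → ℝ := fun i => if ε i then (1 - p) * t i ^ p else 1 with hα
  set β : Fin n → ℝ := fun i => if ε i then Real.sqrt (p * (2 - p)) * t i ^ p else 0 with hβ
  set F : Fin n → ℝ → ℝ :=
    fun i => (Set.Ioc 0 (t i)).indicator (fun u => α i * u ^ (-(q (ε i)))) with hF
  set G : Fin n → ℝ → ℝ :=
    fun i => (Set.Ioc 0 (t i)).indicator (fun u => β i * u ^ (-(q (ε i)))) with hG
  have hm : ∀ i j : Fin n, (0:ℝ) ≤ min (t i) (t j) := fun i j => le_min (ht i) (ht j)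
  have hr : ∀ i j : Fin n, q (ε i) + q (ε j) < 1 := by
    intro i j
    simp only [hq]
    split_ifs <;> linarith
  have hprod : ∀ i j : Fin n, ∀ u : ℝ, F i u * F j u + G i u * G j u
      = (α i * α j + β i * β j) * (Set.Ioc 0 (min (t i) (t j))).indicator
          (fun u => u ^ (-(q (ε i) + q (ε j)))) u := by
    intro i j u
    by_cases hij : u ∈ Set.Ioc 0 (min (t i) (t j))
    · have hi : u ∈ Set.Ioc 0 (t i) := ⟨hij.1, hij.2.trans (min_le_left _ _)⟩
      have hj : u ∈ Set.Ioc 0 (t j) := ⟨hij.1, hij.2.trans (min_le_right _ _)⟩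
      simp only [hF, hG, Set.indicator_of_mem hi, Set.indicator_of_mem hj,
        Set.indicator_of_mem hij]
      rw [neg_add, Real.rpow_add hij.1]
      ring
    · rw [Set.indicator_of_notMem hij, mul_zero]
      have h : u ∉ Set.Ioc 0 (t i) ∨ u ∉ Set.Ioc 0 (t j) := by
        by_contra h
        push_neg at h
        exact hij ⟨h.1.1, le_min h.1.2 h.2.2⟩
      rcases h with h | h
      · simp only [hF, hG, Set.indicator_of_notMem h, zero_mul, add_zero]
      · simp only [hF, hG, Set.indicator_of_notMem h, mul_zero, add_zero]
  have h1p : (1:ℝ) - p ≠ 0 := by linarith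
  have h12p : (1:ℝ) - 2 * p ≠ 0 := by linarith
  have hsq : Real.sqrt (p * (2 - p)) * Real.sqrt (p * (2 - p)) = p * (2 - p) :=
    Real.mul_self_sqrt (by nlinarith)
  have hkey : ∀ i j : Fin n, (∫ u, (F i u * F j u + G i u * G j u))
      = jointBMCov p (ε i, t i) (ε j, t j) := by
    intro i j
    simp only [hprod]
    rw [MeasureTheory.integral_const_mul,
      jointBMCov_indicator_rpow_integral (hr i j) (hm i j)]
    rcases hei : ε i <;> rcases hej : ε j <;>
      simp only [hq, hα, hβ, hei, hej, Bool.false_eq_true, if_true, if_false, jointBMCov]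
    · norm_num
    · rw [show (0:ℝ) + p = p from by ring]
      field_simp
      ring
    · rw [show p + (0:ℝ) = p from by ring, min_comm]
      field_simp
      ring
    · -- true-true case
      have htt : t i ^ p * t j ^ p
          = max (t i) (t j) ^ p * min (t i) (t j) ^ p := by
        rw [← Real.mul_rpow (ht i) (ht j), ← Real.mul_rpow (le_max_of_le_left (ht i)) (hm i j),
          max_mul_min]
      have hmin2 : min (t i) (t j) ^ p * min (t i) (t j) ^ (1 - 2 * p)
          = min (t i) (t j) ^ (1 - p) := by
        rw [← Real.rpow_add' (hm i j) (by intro h; exact h1p (by linarith))]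
        congr 1
        ring
      have e1 : (1 - p) * t i ^ p * ((1 - p) * t j ^ p)
            + Real.sqrt (p * (2 - p)) * t i ^ p * (Real.sqrt (p * (2 - p)) * t j ^ p)
          = t i ^ p * t j ^ p := by
        rw [show (1 - p) * t i ^ p * ((1 - p) * t j ^ p)
              + Real.sqrt (p * (2 - p)) * t i ^ p * (Real.sqrt (p * (2 - p)) * t j ^ p)
            = ((1 - p) * (1 - p) + Real.sqrt (p * (2 - p)) * Real.sqrt (p * (2 - p)))
              * (t i ^ p * t j ^ p) from by ring, hsq]
        ring
      rw [show 1 - (p + p) = 1 - 2 * p from by ring, e1, htt, mul_assoc,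
        ← mul_div_assoc, hmin2]
      ring
  have h_int : ∀ i j : Fin n,
      MeasureTheory.Integrable (fun u => F i u * F j u + G i u * G j u) := by
    intro i j
    have := (jointBMCov_indicator_rpow_integrable (hr i j) (hm i j)).const_mul
      (α i * α j + β i * β j)
    exact this.congr (by
      filter_upwards with u
      exact (hprod i j u).symm)
  have hpos : 0 ≤ ∫ u, ((∑ i, c i * F i u) ^ 2 + (∑ i, c i * G i u) ^ 2) :=
    MeasureTheory.integral_nonneg fun u => add_nonneg (sq_nonneg _) (sq_nonneg _)
  have hexp : ∀ u : ℝ, (∑ i, c i * F i u) ^ 2 + (∑ i, c i * G i u) ^ 2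
      = ∑ i, ∑ j, c i * c j * (F i u * F j u + G i u * G j u) := by
    intro u
    rw [sq, sq, Finset.sum_mul_sum, Finset.sum_mul_sum, ← Finset.sum_add_distrib]
    refine Finset.sum_congr rfl fun i _ => ?_
    rw [← Finset.sum_add_distrib]
    refine Finset.sum_congr rfl fun j _ => ?_
    ring
  calc (0:ℝ) ≤ ∫ u, ((∑ i, c i * F i u) ^ 2 + (∑ i, c i * G i u) ^ 2) := hpos
    _ = ∑ i, ∑ j, c i * c j * jointBMCov p (ε i, t i) (ε j, t j) := by
        simp only [hexp]
        rw [MeasureTheory.integral_finset_sum _ (fun i _ =>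
          MeasureTheory.integrable_finset_sum _ (fun j _ => ((h_int i j).const_mul _)))]
        refine Finset.sum_congr rfl fun i _ => ?_
        rw [MeasureTheory.integral_finset_sum _ (fun j _ => ((h_int i j).const_mul _))]
        refine Finset.sum_congr rfl fun j _ => ?_
        rw [MeasureTheory.integral_const_mul, hkey i j]
end

section
/- Let p ∈ (0,1) and let η be a Yule–Simon random variable with parameter 1/p, i.e. P(η = k) = p^{-1} B(k, 1/p + 1) for k ≥ 1. Then the tail probabilities satisfy lim_{n→∞} n^{1/p} · P(η > n) = Γ(1/p + 1); that is, lim_{n→∞} n^{1/p} · ∑_{k=n+1}^∞ p^{-1} B(k, 1/p + 1) = Γ(1/p + 1). -/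
open Filter Real Finset Topology

/-- The Yule–Simon mass function with parameter `1/p`:
`f_p(k) = p⁻¹ B(k, 1/p + 1)` where `B(x,y) = Γ(x)Γ(y)/Γ(x+y)`. -/
noncomputable def yuleSimonPMF (p : ℝ) (k : ℕ) : ℝ :=
  p⁻¹ * (Real.Gamma k * Real.Gamma (1 / p + 1) / Real.Gamma ((k : ℝ) + 1 / p + 1))

lemma gamma_add_nat_prod {ρ : ℝ} (hρ : 0 < ρ) (n : ℕ) :
    Real.Gamma (ρ + n + 1) = (∏ j ∈ Finset.range (n + 1), (ρ + j)) * Real.Gamma ρ := by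
  induction n with
  | zero => simp [Real.Gamma_add_one hρ.ne']
  | succ n ih =>
      have h1 : ρ + ((n + 1 : ℕ) : ℝ) + 1 = (ρ + n + 1) + 1 := by push_cast; ring
      rw [h1, Real.Gamma_add_one (by positivity), ih,
        Finset.prod_range_succ (fun j => (ρ + (j : ℝ))) (n + 1)]
      push_cast; ring

lemma telescope_step {ρ : ℝ} (hρ : 0 < ρ) {k : ℕ} (hk : 1 ≤ k) :
    ρ * (Real.Gamma k * Real.Gamma (ρ + 1) / Real.Gamma ((k : ℝ) + ρ + 1)) =
      Real.Gamma (ρ + 1) *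
        (Real.Gamma k / Real.Gamma ((k : ℝ) + ρ)
          - Real.Gamma ((k + 1 : ℕ)) / Real.Gamma (((k + 1 : ℕ) : ℝ) + ρ)) := by
  have hk0 : (0 : ℝ) < k := by exact_mod_cast hk
  have hGk : (0 : ℝ) < Real.Gamma ((k : ℝ) + ρ) := Real.Gamma_pos_of_pos (by positivity)
  have h1 : Real.Gamma (((k + 1 : ℕ) : ℝ) + ρ) = ((k : ℝ) + ρ) * Real.Gamma ((k : ℝ) + ρ) := by
    rw [show ((k + 1 : ℕ) : ℝ) + ρ = ((k : ℝ) + ρ) + 1 by push_cast; ring,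
      Real.Gamma_add_one (by positivity)]
  have h2 : Real.Gamma ((k + 1 : ℕ)) = (k : ℝ) * Real.Gamma k := by
    rw [show ((k + 1 : ℕ) : ℝ) = (k : ℝ) + 1 by push_cast; ring, Real.Gamma_add_one hk0.ne']
  have h3 : Real.Gamma ((k : ℝ) + ρ + 1) = ((k : ℝ) + ρ) * Real.Gamma ((k : ℝ) + ρ) := by
    rw [Real.Gamma_add_one (by positivity)]
  rw [h1, h2, h3]
  have hkρ : (0 : ℝ) < (k : ℝ) + ρ := by positivity
  field_simp
  ring

/-- Tail asymptotics of the Yule–Simon distribution with parameter `1/p`: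
`n^{1/p} · P(η > n) = n^{1/p} ∑_{k>n} f_p(k) → Γ(1/p + 1)` as `n → ∞`.
Here `n^{1/p}` is a real power. -/
theorem yuleSimon_tail_asymptotic (p : ℝ) (hp0 : 0 < p) (hp1 : p < 1) :
    Filter.Tendsto
      (fun n : ℕ => (n : ℝ) ^ (1 / p) * ∑' j : ℕ, yuleSimonPMF p (n + 1 + j))
      Filter.atTop (nhds (Real.Gamma (1 / p + 1))) := by
  obtain ⟨ρ, hρ, hρdef⟩ : ∃ ρ : ℝ, 0 < ρ ∧ ρ = 1 / p := ⟨1 / p, by positivity, rfl⟩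
  rw [← hρdef]
  set g : ℕ → ℝ := fun m => Real.Gamma m / Real.Gamma ((m : ℝ) + ρ) with hg
  -- the PMF as a telescoping difference
  have hpmf : ∀ k : ℕ, 1 ≤ k →
      yuleSimonPMF p k = Real.Gamma (ρ + 1) * (g k - g (k + 1)) := by
    intro k hk
    have : yuleSimonPMF p k
        = ρ * (Real.Gamma k * Real.Gamma (ρ + 1) / Real.Gamma ((k : ℝ) + ρ + 1)) := by
      rw [yuleSimonPMF, ← hρdef, hρdef, one_div]
    rw [this, telescope_step hρ hk, hg]
  -- key identity relating `g` to `GammaSeq`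
  have hkey : ∀ m : ℕ, 1 ≤ m →
      (m : ℝ) ^ ρ * g (m + 1) = Real.GammaSeq ρ m / Real.Gamma ρ := by
    intro m hm
    have hprod : (0 : ℝ) < ∏ j ∈ Finset.range (m + 1), (ρ + j) :=
      Finset.prod_pos fun j _ => by positivity
    have hGρ : (0 : ℝ) < Real.Gamma ρ := Real.Gamma_pos_of_pos hρ
    have hfac : Real.Gamma (((m + 1 : ℕ) : ℝ)) = (m.factorial : ℝ) := by
      rw [show ((m + 1 : ℕ) : ℝ) = (m : ℝ) + 1 by push_cast; ring]
      exact_mod_cast Real.Gamma_nat_eq_factorial m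
    have harg : ((m + 1 : ℕ) : ℝ) + ρ = ρ + m + 1 := by push_cast; ring
    simp only [hg, Real.GammaSeq]
    rw [hfac, harg, gamma_add_nat_prod hρ]
    field_simp
  have hGS := Real.GammaSeq_tendsto_Gamma ρ
  have hGρ : (0 : ℝ) < Real.Gamma ρ := Real.Gamma_pos_of_pos hρ
  -- `g (m+1) → 0`
  have hpow : Tendsto (fun m : ℕ => (m : ℝ) ^ ρ) atTop atTop :=
    (tendsto_rpow_atTop hρ).comp tendsto_natCast_atTop_atTop
  have hg0 : Tendsto (fun m : ℕ => g (m + 1)) atTop (𝓝 0) := by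
    have h := hGS.div_atTop (hpow.atTop_mul_const hGρ)
    apply h.congr'
    filter_upwards [eventually_ge_atTop 1] with m hm
    have hmp : (0 : ℝ) < (m : ℝ) ^ ρ := by
      have : (0 : ℝ) < (m : ℝ) := by exact_mod_cast hm
      positivity
    have hk' : Real.GammaSeq ρ m = ((m : ℝ) ^ ρ * g (m + 1)) * Real.Gamma ρ := by
      rw [hkey m hm]; field_simp
    rw [div_eq_iff (mul_pos hmp hGρ).ne', hk']; ring
  -- closed form for the tail sum
  have htail : ∀ n : ℕ, (∑' j : ℕ, yuleSimonPMF p (n + 1 + j))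
      = Real.Gamma (ρ + 1) * g (n + 1) := by
    intro n
    have hnonneg : ∀ j : ℕ, 0 ≤ yuleSimonPMF p (n + 1 + j) := by
      intro j
      have h1 : (0 : ℝ) < Real.Gamma ((n + 1 + j : ℕ) : ℝ) := by
        apply Real.Gamma_pos_of_pos; push_cast; positivity
      have h2 : (0 : ℝ) < Real.Gamma (1 / p + 1) := Real.Gamma_pos_of_pos (by positivity)
      have h3 : (0 : ℝ) < Real.Gamma (((n + 1 + j : ℕ) : ℝ) + 1 / p + 1) := by
        apply Real.Gamma_pos_of_pos; positivity
      rw [yuleSimonPMF]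
      positivity
    have hsum : HasSum (fun j : ℕ => yuleSimonPMF p (n + 1 + j))
        (Real.Gamma (ρ + 1) * g (n + 1)) := by
      rw [hasSum_iff_tendsto_nat_of_nonneg hnonneg]
      have hps : ∀ N : ℕ, ∑ j ∈ Finset.range N, yuleSimonPMF p (n + 1 + j)
          = Real.Gamma (ρ + 1) * g (n + 1) - Real.Gamma (ρ + 1) * g (n + 1 + N) := by
        intro N
        have := Finset.sum_range_sub' (fun j => Real.Gamma (ρ + 1) * g (n + 1 + j)) N
        rw [← this]
        apply Finset.sum_congr rfl
        intro j _
        rw [hpmf (n + 1 + j) (by omega)]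
        rw [show n + 1 + (j + 1) = n + 1 + j + 1 by omega]
        ring
      simp only [hps]
      have h0 : Tendsto (fun N : ℕ => g (n + 1 + N)) atTop (𝓝 0) := by
        have := hg0.comp (tendsto_add_atTop_nat n)
        apply this.congr
        intro N
        simp only [Function.comp_apply]
        rw [show N + n + 1 = n + 1 + N by omega]
      have := (tendsto_const_nhds (x := Real.Gamma (ρ + 1) * g (n + 1))
          (f := atTop (α := ℕ))).sub (h0.const_mul (Real.Gamma (ρ + 1)))
      simpa using this
    exact hsum.tsum_eq
  -- conclude
  have hfin : Tendsto (fun n : ℕ => Real.Gamma (ρ + 1) * (Real.GammaSeq ρ n / Real.Gamma ρ))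
      atTop (𝓝 (Real.Gamma (ρ + 1))) := by
    have := (hGS.div_const (Real.Gamma ρ)).const_mul (Real.Gamma (ρ + 1))
    rw [div_self hGρ.ne', mul_one] at this
    exact this
  apply hfin.congr'
  filter_upwards [eventually_ge_atTop 1] with n hn
  rw [htail n, ← hkey n hn]
  ring
end

section
/- Let Λ be a measure on (0,∞) with ∫_{(0,∞)} min(x, 1) Λ(dx) < ∞, let Φ(λ) := ∫_{(0,∞)} (1 − e^{−λx}) Λ(dx) for λ ≥ 0, and let β(Λ) := inf{ r > 0 : ∫_{(0,1]} x^r Λ(dx) < ∞ }. Then for every ε > 0, Φ(λ)/λ^{β(Λ)+ε} → 0 as λ → ∞. -/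
open MeasureTheory

/-- The Blumenthal–Getoor index of the Lévy measure `Λ` of a subordinator:
`β(Λ) = inf { r > 0 : ∫_{(0,1]} x^r Λ(dx) < ∞ }` (real powers). -/
noncomputable def bgIndexSub (Λ : Measure ℝ) : ℝ :=
  sInf {r : ℝ | 0 < r ∧ ∫⁻ x in Set.Ioc (0 : ℝ) 1, ENNReal.ofReal (x ^ r) ∂Λ < ⊤}

private lemma aux_one_sub_exp_le_rpow {s u : ℝ} (hs : 0 < s) (hs1 : s ≤ 1) (hu : 0 ≤ u) :
    1 - Real.exp (-u) ≤ u ^ s := by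
  rcases eq_or_lt_of_le hu with h0 | h0
  · simp [← h0, Real.zero_rpow hs.ne']
  rcases le_or_gt u 1 with h1 | h1
  · have h2 : 1 - Real.exp (-u) ≤ u := by
      have := Real.add_one_le_exp (-u); linarith
    calc 1 - Real.exp (-u) ≤ u := h2
      _ = u ^ (1 : ℝ) := (Real.rpow_one u).symm
      _ ≤ u ^ s := Real.rpow_le_rpow_of_exponent_ge h0 h1 hs1
  · have : (1 : ℝ) ≤ u ^ s := Real.one_le_rpow h1.le hs.le
    have := Real.exp_pos (-u); linarith

/-- Blumenthal–Getoor: if `Φ` is the Laplace exponent of a driftless subordinator with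
Lévy measure `Λ`, then for every `ε > 0`, `Φ(λ)/λ^{β(Λ)+ε} → 0` as `λ → ∞`. -/
theorem subordinator_laplace_exponent_growth
    (Λ : Measure ℝ) (hsupp : Λ (Set.Iic 0) = 0)
    (hint : ∫⁻ x in Set.Ioi (0 : ℝ), ENNReal.ofReal (min x 1) ∂Λ < ⊤)
    (Φ : ℝ → ℝ)
    (hΦ : ∀ l : ℝ, 0 ≤ l → Φ l = ∫ x in Set.Ioi (0 : ℝ), (1 - Real.exp (-l * x)) ∂Λ)
    (ε : ℝ) (hε : 0 < ε) :
    Filter.Tendsto (fun l : ℝ => Φ l / l ^ (bgIndexSub Λ + ε)) Filter.atTop (nhds 0) := by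
  set S : Set ℝ :=
    {r : ℝ | 0 < r ∧ ∫⁻ x in Set.Ioc (0 : ℝ) 1, ENNReal.ofReal (x ^ r) ∂Λ < ⊤} with hS
  -- 1 ∈ S
  have h1S : (1 : ℝ) ∈ S := by
    refine ⟨one_pos, ?_⟩
    calc ∫⁻ x in Set.Ioc (0 : ℝ) 1, ENNReal.ofReal (x ^ (1 : ℝ)) ∂Λ
        ≤ ∫⁻ x in Set.Ioc (0 : ℝ) 1, ENNReal.ofReal (min x 1) ∂Λ := by
          refine setLIntegral_mono (by fun_prop) fun x hx => ?_
          rw [Real.rpow_one]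
          exact ENNReal.ofReal_le_ofReal (le_min le_rfl hx.2)
      _ ≤ ∫⁻ x in Set.Ioi (0 : ℝ), ENNReal.ofReal (min x 1) ∂Λ :=
          lintegral_mono_set Set.Ioc_subset_Ioi_self
      _ < ⊤ := hint
  have hβ0 : 0 ≤ bgIndexSub Λ := Real.sInf_nonneg fun x hx => hx.1.le
  set q : ℝ := bgIndexSub Λ + ε with hq
  have hq0 : 0 < q := by positivity
  -- choose s₀ ∈ S, 0 < s₀ ≤ 1, s₀ < q
  obtain ⟨t, htS, htlt⟩ := Real.lt_sInf_add_pos ⟨1, h1S⟩ hε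
  set s₀ : ℝ := min t 1 with hs₀def
  have hs₀S : s₀ ∈ S := by
    rcases le_total t 1 with h | h
    · simpa [hs₀def, min_eq_left h] using htS
    · simpa [hs₀def, min_eq_right h] using h1S
  have hs₀pos : 0 < s₀ := hs₀S.1
  have hs₀le1 : s₀ ≤ 1 := min_le_right _ _
  have hs₀lt : s₀ < q := lt_of_le_of_lt (min_le_left _ _) htlt
  set A : ENNReal := ∫⁻ x in Set.Ioc (0 : ℝ) 1, ENNReal.ofReal (x ^ s₀) ∂Λ with hAdef
  have hA : A ≠ ⊤ := hs₀S.2.ne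
  have hB : Λ (Set.Ioi (1 : ℝ)) ≠ ⊤ := by
    have : Λ (Set.Ioi (1 : ℝ)) = ∫⁻ x in Set.Ioi (1 : ℝ), 1 ∂Λ := (setLIntegral_one _).symm
    rw [this]
    refine ne_top_of_le_ne_top hint.ne ?_
    calc ∫⁻ x in Set.Ioi (1 : ℝ), 1 ∂Λ
        ≤ ∫⁻ x in Set.Ioi (1 : ℝ), ENNReal.ofReal (min x 1) ∂Λ := by
          refine setLIntegral_mono (by fun_prop) fun x hx => ?_
          rw [min_eq_right (le_of_lt hx)]
          simp
      _ ≤ ∫⁻ x in Set.Ioi (0 : ℝ), ENNReal.ofReal (min x 1) ∂Λ :=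
          lintegral_mono_set (Set.Ioi_subset_Ioi zero_le_one)
  set C₁ : ℝ := A.toReal with hC₁
  set C₂ : ℝ := (Λ (Set.Ioi (1 : ℝ))).toReal with hC₂
  have hC₁0 : 0 ≤ C₁ := ENNReal.toReal_nonneg
  have hC₂0 : 0 ≤ C₂ := ENNReal.toReal_nonneg
  -- key upper bound
  have key : ∀ l : ℝ, 1 ≤ l → Φ l ≤ l ^ s₀ * C₁ + C₂ := by
    intro l hl
    have hl0 : (0 : ℝ) ≤ l := le_trans zero_le_one hl
    have hnn : (fun _ : ℝ => (0 : ℝ)) ≤ᵐ[Λ.restrict (Set.Ioi 0)] fun x => 1 - Real.exp (-l * x) := by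
      refine (ae_restrict_iff' measurableSet_Ioi).2 (Filter.Eventually.of_forall fun x hx => ?_)
      have h1 : Real.exp (-l * x) ≤ 1 := by
        rw [Real.exp_le_one_iff]
        have := hx.out
        nlinarith
      simp only
      linarith
    have hcont : Continuous fun x : ℝ => 1 - Real.exp (-l * x) := by fun_prop
    have hmeas : AEStronglyMeasurable (fun x : ℝ => 1 - Real.exp (-l * x))
        (Λ.restrict (Set.Ioi 0)) := hcont.aestronglyMeasurable
    rw [hΦ l hl0, integral_eq_lintegral_of_nonneg_ae hnn hmeas]
    have hlint : ∫⁻ x in Set.Ioi (0 : ℝ), ENNReal.ofReal (1 - Real.exp (-l * x)) ∂Λ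
        ≤ ENNReal.ofReal (l ^ s₀) * A + Λ (Set.Ioi (1 : ℝ)) := by
      rw [← Set.Ioc_union_Ioi_eq_Ioi (zero_le_one (α := ℝ)),
        lintegral_union measurableSet_Ioi (Set.Ioc_disjoint_Ioi le_rfl)]
      refine add_le_add ?_ ?_
      · calc ∫⁻ x in Set.Ioc (0 : ℝ) 1, ENNReal.ofReal (1 - Real.exp (-l * x)) ∂Λ
            ≤ ∫⁻ x in Set.Ioc (0 : ℝ) 1, ENNReal.ofReal (l ^ s₀ * x ^ s₀) ∂Λ := by
              refine setLIntegral_mono (by fun_prop) fun x hx => ?_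
              refine ENNReal.ofReal_le_ofReal ?_
              have hx0 : (0 : ℝ) ≤ x := hx.1.le
              have hlx : (0 : ℝ) ≤ l * x := mul_nonneg hl0 hx0
              have := aux_one_sub_exp_le_rpow hs₀pos hs₀le1 hlx
              rw [← neg_mul, Real.mul_rpow hl0 hx0] at this
              exact this
          _ = ENNReal.ofReal (l ^ s₀) * A := by
              simp_rw [ENNReal.ofReal_mul (Real.rpow_nonneg hl0 _)]
              exact lintegral_const_mul' _ _ ENNReal.ofReal_ne_top
      · calc ∫⁻ x in Set.Ioi (1 : ℝ), ENNReal.ofReal (1 - Real.exp (-l * x)) ∂Λ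
            ≤ ∫⁻ x in Set.Ioi (1 : ℝ), 1 ∂Λ := by
              refine setLIntegral_mono measurable_const fun x hx => ?_
              refine ENNReal.ofReal_le_one.2 ?_
              have := Real.exp_pos (-l * x)
              linarith
          _ = Λ (Set.Ioi (1 : ℝ)) := setLIntegral_one _
    have hfin : ENNReal.ofReal (l ^ s₀) * A + Λ (Set.Ioi (1 : ℝ)) ≠ ⊤ :=
      ENNReal.add_ne_top.2 ⟨ENNReal.mul_ne_top ENNReal.ofReal_ne_top hA, hB⟩
    calc (∫⁻ x in Set.Ioi (0 : ℝ), ENNReal.ofReal (1 - Real.exp (-l * x)) ∂Λ).toReal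
        ≤ (ENNReal.ofReal (l ^ s₀) * A + Λ (Set.Ioi (1 : ℝ))).toReal :=
          ENNReal.toReal_mono hfin hlint
      _ = l ^ s₀ * C₁ + C₂ := by
          rw [ENNReal.toReal_add (ENNReal.mul_ne_top ENNReal.ofReal_ne_top hA) hB,
            ENNReal.toReal_mul, ENNReal.toReal_ofReal (Real.rpow_nonneg hl0 _)]
  -- nonnegativity
  have hΦnn : ∀ l : ℝ, 0 ≤ l → 0 ≤ Φ l := by
    intro l hl
    rw [hΦ l hl]
    refine setIntegral_nonneg measurableSet_Ioi fun x hx => ?_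
    have : Real.exp (-l * x) ≤ 1 := by
      rw [Real.exp_le_one_iff]
      have := hx.out
      nlinarith
    linarith
  -- the dominating function tends to 0
  have hg : Filter.Tendsto (fun l : ℝ => C₁ * l ^ (s₀ - q) + C₂ * l ^ (-q))
      Filter.atTop (nhds 0) := by
    have h1 : Filter.Tendsto (fun l : ℝ => C₁ * l ^ (s₀ - q)) Filter.atTop (nhds 0) := by
      have : Filter.Tendsto (fun l : ℝ => l ^ (-(q - s₀))) Filter.atTop (nhds 0) :=
        tendsto_rpow_neg_atTop (by linarith)
      have h := this.const_mul C₁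
      rw [mul_zero] at h
      simpa [neg_sub] using h
    have h2 : Filter.Tendsto (fun l : ℝ => C₂ * l ^ (-q)) Filter.atTop (nhds 0) := by
      have h := (tendsto_rpow_neg_atTop hq0).const_mul C₂
      rwa [mul_zero] at h
    simpa using h1.add h2
  refine squeeze_zero' ?_ ?_ hg
  · filter_upwards [Filter.eventually_ge_atTop (1 : ℝ)] with l hl
    exact div_nonneg (hΦnn l (le_trans zero_le_one hl))
      (Real.rpow_nonneg (le_trans zero_le_one hl) _)
  · filter_upwards [Filter.eventually_ge_atTop (1 : ℝ)] with l hl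
    have hl0 : (0 : ℝ) < l := lt_of_lt_of_le one_pos hl
    have hlq : (0 : ℝ) < l ^ q := Real.rpow_pos_of_pos hl0 _
    have hdiv : Φ l / l ^ q ≤ (l ^ s₀ * C₁ + C₂) / l ^ q := by
      gcongr
      exact key l hl
    refine le_trans hdiv (le_of_eq ?_)
    rw [add_div, Real.rpow_sub hl0, Real.rpow_neg hl0.le]
    ring
end

section
/- Let a ∈ ℝ and let Λ be a Lévy measure on ℝ, and define the characteristic exponent (with no Gaussian component) Ψ(λ) = i·a·λ + ∫_ℝ (e^{iλx} − 1 − iλx·1_{|x|≤1}) Λ(dx) for λ ∈ ℝ, and let β(Λ) be the Blumenthal–Getoor index of Λ. Then for every η > 0, as |λ| → ∞: (i) if ∫_{[-1,1]} |x| Λ(dx) = ∞, then |Ψ(λ)| / |λ|^{β(Λ)+η} → 0; (ii) if ∫_{[-1,1]} |x| Λ(dx) < ∞, then |Ψ(λ)| / |λ|^{1+η} → 0. -/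
open MeasureTheory Filter

/-- The Blumenthal–Getoor index of a measure `Λ` on `ℝ`:
`β(Λ) = inf { r > 0 : ∫_{[-1,1]} |x|^r Λ(dx) < ∞ }` (real powers). -/
noncomputable def bgIndex (Λ : Measure ℝ) : ℝ :=
  sInf {r : ℝ | 0 < r ∧ ∫⁻ x in Set.Icc (-1 : ℝ) 1, ENNReal.ofReal (|x| ^ r) ∂Λ < ⊤}

lemma exp_bound_aux (r θ : ℝ) (hr1 : 1 ≤ r) (hr2 : r ≤ 2) :
    ‖Complex.exp (Complex.I * θ) - 1 - Complex.I * θ‖ ≤ 3 * |θ| ^ r := by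
  have habs : ‖Complex.I * θ‖ = |θ| := by
    simp
  have hnorm_exp : ‖Complex.exp (Complex.I * θ)‖ = 1 := by
    rw [Complex.norm_exp]
    simp
  rcases le_or_gt (|θ|) 1 with h | h
  · have h2 := Complex.norm_exp_sub_one_sub_id_le (x := Complex.I * θ) (by rw [habs]; exact h)
    rw [habs] at h2
    refine h2.trans ?_
    have hpow : |θ| ^ (2:ℕ) ≤ |θ| ^ r := by
      rcases eq_or_lt_of_le (abs_nonneg θ) with h0 | h0
      · rw [← h0]
        rw [Real.zero_rpow (by linarith), pow_two, mul_zero]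
      · calc |θ| ^ (2:ℕ) = |θ| ^ ((2:ℕ):ℝ) := by rw [Real.rpow_natCast]
          _ ≤ |θ| ^ r := Real.rpow_le_rpow_of_exponent_ge h0 h (by exact_mod_cast hr2)
    nlinarith [Real.rpow_nonneg (abs_nonneg θ) r]
  · have hb : ‖Complex.exp (Complex.I * θ) - 1 - Complex.I * θ‖ ≤ 2 + |θ| := by
      calc ‖Complex.exp (Complex.I * θ) - 1 - Complex.I * θ‖
          ≤ ‖Complex.exp (Complex.I * θ) - 1‖ + ‖Complex.I * (θ:ℂ)‖ := norm_sub_le _ _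
        _ ≤ (‖Complex.exp (Complex.I * θ)‖ + ‖(1:ℂ)‖) + |θ| := by
            rw [show ‖Complex.I * (θ:ℂ)‖ = |θ| from habs]
            exact add_le_add (norm_sub_le _ _) le_rfl
        _ = 2 + |θ| := by rw [hnorm_exp]; norm_num
    refine hb.trans ?_
    have hpow : |θ| ≤ |θ| ^ r := by
      calc |θ| = |θ| ^ (1:ℝ) := (Real.rpow_one _).symm
        _ ≤ |θ| ^ r := Real.rpow_le_rpow_of_exponent_le h.le hr1
    nlinarith

lemma tendsto_pow_div_pow (c s p : ℝ) (hsp : s < p) :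
    Tendsto (fun l : ℝ => c * |l| ^ s / |l| ^ p) (cocompact ℝ) (nhds 0) := by
  have habs : Tendsto (fun l : ℝ => |l|) (cocompact ℝ) atTop := by
    exact tendsto_norm_cocompact_atTop (E := ℝ)
  have h1 : Tendsto (fun t : ℝ => c * t ^ (s - p)) atTop (nhds 0) := by
    have := (tendsto_rpow_neg_atTop (y := p - s) (by linarith)).const_mul c
    simpa [neg_sub] using this
  have h2 : Tendsto (fun t : ℝ => c * t ^ s / t ^ p) atTop (nhds 0) := by
    refine h1.congr' ?_
    filter_upwards [eventually_gt_atTop (0:ℝ)] with t ht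
    rw [Real.rpow_sub ht]
    ring
  exact h2.comp habs

lemma char_exp_growth_aux (a : ℝ) (Λ : Measure ℝ)
    (hΛint : ∫⁻ x : ℝ, ENNReal.ofReal (min (x ^ 2) 1) ∂Λ < ⊤)
    (Ψ : ℝ → ℂ)
    (hΨ : ∀ l : ℝ, Ψ l = Complex.I * (a : ℂ) * (l : ℂ) +
      ∫ x : ℝ, (Complex.exp (Complex.I * (l : ℂ) * (x : ℂ)) - 1 -
        (if |x| ≤ 1 then Complex.I * (l : ℂ) * (x : ℂ) else 0)) ∂Λ)
    (r p : ℝ) (hr1 : 1 ≤ r) (hr2 : r ≤ 2) (hrp : r < p) (h1p : 1 < p)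
    (hI : ∫⁻ x in Set.Icc (-1 : ℝ) 1, ENNReal.ofReal (|x| ^ r) ∂Λ < ⊤) :
    Tendsto (fun l : ℝ => ‖Ψ l‖ / |l| ^ p) (cocompact ℝ) (nhds 0) := by
  set s : Set ℝ := Set.Icc (-1 : ℝ) 1 with hs_def
  have hs : MeasurableSet s := measurableSet_Icc
  have hmem : ∀ x : ℝ, x ∈ s ↔ |x| ≤ 1 := by
    intro x; rw [hs_def, Set.mem_Icc, abs_le]
  -- tail mass is finite
  have hT : Λ sᶜ < ⊤ := by
    have h1 : Λ sᶜ = ∫⁻ _ in sᶜ, 1 ∂Λ := (setLIntegral_one _).symm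
    have h2 : ∫⁻ _ in sᶜ, (1:ENNReal) ∂Λ ≤ ∫⁻ x in sᶜ, ENNReal.ofReal (min (x ^ 2) 1) ∂Λ := by
      refine setLIntegral_mono' hs.compl fun x hx => ?_
      have hx1 : ¬ |x| ≤ 1 := by rw [← hmem x]; exact hx
      push_neg at hx1
      have : min (x ^ 2) 1 = 1 := by
        have : (1:ℝ) ≤ x ^ 2 := by nlinarith [sq_abs x]
        exact min_eq_right this
      rw [this]
      simp
    calc Λ sᶜ ≤ ∫⁻ x in sᶜ, ENNReal.ofReal (min (x ^ 2) 1) ∂Λ := h1 ▸ h2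
      _ ≤ ∫⁻ x, ENNReal.ofReal (min (x ^ 2) 1) ∂Λ := setLIntegral_le_lintegral _ _
      _ < ⊤ := hΛint
  set C1 : ℝ := (∫⁻ x in s, ENNReal.ofReal (|x| ^ r) ∂Λ).toReal with hC1
  set C2 : ℝ := (Λ sᶜ).toReal with hC2
  -- the key norm bound
  have hb : ∀ l : ℝ, ‖Ψ l‖ ≤ |a| * |l| + ((3 * C1) * |l| ^ r + (2 * C2)) := by
    intro l
    rw [hΨ l]
    refine (norm_add_le _ _).trans ?_
    have h1 : ‖Complex.I * (a:ℂ) * (l:ℂ)‖ = |a| * |l| := by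
      simp
    rw [h1]
    gcongr
    set f : ℝ → ℂ := fun x => Complex.exp (Complex.I * (l : ℂ) * (x : ℂ)) - 1 -
        (if |x| ≤ 1 then Complex.I * (l : ℂ) * (x : ℂ) else 0) with hf
    have hcast : ∀ x : ℝ, Complex.I * (l : ℂ) * (x : ℂ) = Complex.I * ((l * x : ℝ) : ℂ) := by
      intro x; push_cast; ring
    -- pointwise bounds
    have hle : ∫⁻ x, ENNReal.ofReal ‖f x‖ ∂Λ ≤
        ENNReal.ofReal (3 * |l| ^ r) * (∫⁻ x in s, ENNReal.ofReal (|x| ^ r) ∂Λ) + 2 * Λ sᶜ := by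
      rw [← lintegral_add_compl (fun x => ENNReal.ofReal ‖f x‖) hs]
      gcongr ?_ + ?_
      · have b1 : ∫⁻ x in s, ENNReal.ofReal ‖f x‖ ∂Λ ≤
            ∫⁻ x in s, ENNReal.ofReal (3 * |l| ^ r) * ENNReal.ofReal (|x| ^ r) ∂Λ := by
          refine setLIntegral_mono' hs fun x hx => ?_
          have hx1 : |x| ≤ 1 := (hmem x).mp hx
          have hfx : f x = Complex.exp (Complex.I * ((l*x:ℝ):ℂ)) - 1 - Complex.I * ((l*x:ℝ):ℂ) := by
            rw [hf]; simp only [if_pos hx1, hcast x]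
          have hbd : ‖f x‖ ≤ 3 * |l| ^ r * |x| ^ r := by
            rw [hfx]
            refine (exp_bound_aux r (l*x) hr1 hr2).trans ?_
            rw [abs_mul, Real.mul_rpow (abs_nonneg l) (abs_nonneg x), mul_assoc]
          calc ENNReal.ofReal ‖f x‖
              ≤ ENNReal.ofReal (3 * |l| ^ r * |x| ^ r) := ENNReal.ofReal_le_ofReal hbd
            _ = ENNReal.ofReal (3 * |l| ^ r) * ENNReal.ofReal (|x| ^ r) := by
                rw [ENNReal.ofReal_mul (by positivity)]
        refine b1.trans_eq ?_
        exact lintegral_const_mul' _ _ ENNReal.ofReal_ne_top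
      · have b2 : ∫⁻ x in sᶜ, ENNReal.ofReal ‖f x‖ ∂Λ ≤ ∫⁻ _ in sᶜ, (2:ENNReal) ∂Λ := by
          refine setLIntegral_mono' hs.compl fun x hx => ?_
          have hx1 : ¬ |x| ≤ 1 := by rw [← hmem x]; exact hx
          have hfx : f x = Complex.exp (Complex.I * (l : ℂ) * (x : ℂ)) - 1 := by
            rw [hf]; simp only [if_neg hx1, sub_zero]
          have hbd : ‖f x‖ ≤ 2 := by
            rw [hfx]
            refine (norm_sub_le _ _).trans ?_
            have : ‖Complex.exp (Complex.I * (l : ℂ) * (x : ℂ))‖ = 1 := by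
              rw [Complex.norm_exp]
              rw [hcast x]
              simp
            rw [this]
            norm_num
          calc ENNReal.ofReal ‖f x‖
              ≤ ENNReal.ofReal 2 := ENNReal.ofReal_le_ofReal hbd
            _ = 2 := by norm_num
        refine b2.trans_eq ?_
        exact setLIntegral_const _ _
    have hRfin : ENNReal.ofReal (3 * |l| ^ r) * (∫⁻ x in s, ENNReal.ofReal (|x| ^ r) ∂Λ)
        + 2 * Λ sᶜ ≠ ⊤ := by
      apply ENNReal.add_ne_top.mpr
      constructor
      · exact ENNReal.mul_ne_top ENNReal.ofReal_ne_top hI.ne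
      · exact ENNReal.mul_ne_top (by norm_num) hT.ne
    calc ‖∫ x, f x ∂Λ‖ ≤ (∫⁻ x, ENNReal.ofReal ‖f x‖ ∂Λ).toReal := norm_integral_le_lintegral_norm f
      _ ≤ (ENNReal.ofReal (3 * |l| ^ r) * (∫⁻ x in s, ENNReal.ofReal (|x| ^ r) ∂Λ)
            + 2 * Λ sᶜ).toReal := ENNReal.toReal_mono hRfin hle
      _ = (3 * |l| ^ r) * C1 + 2 * C2 := by
          rw [ENNReal.toReal_add (ENNReal.mul_ne_top ENNReal.ofReal_ne_top hI.ne)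
              (ENNReal.mul_ne_top (by norm_num) hT.ne),
            ENNReal.toReal_mul, ENNReal.toReal_mul, ENNReal.toReal_ofReal (by positivity)]
          norm_num
          rfl
      _ = (3 * C1) * |l| ^ r + 2 * C2 := by ring
  -- squeeze
  have habs : Tendsto (fun l : ℝ => |l|) (cocompact ℝ) atTop := by
    exact tendsto_norm_cocompact_atTop (E := ℝ)
  have hg : Tendsto (fun l : ℝ => |a| * |l| ^ (1:ℝ) / |l| ^ p + (3 * C1) * |l| ^ r / |l| ^ p
      + (2 * C2) * |l| ^ (0:ℝ) / |l| ^ p) (cocompact ℝ) (nhds 0) := by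
    have := (tendsto_pow_div_pow (|a|) 1 p h1p).add
      ((tendsto_pow_div_pow (3 * C1) r p hrp).add
        (tendsto_pow_div_pow (2 * C2) 0 p (by linarith)))
    simpa [add_assoc] using this
  refine squeeze_zero' ?_ ?_ hg
  · filter_upwards with l
    positivity
  · filter_upwards [habs.eventually (eventually_ge_atTop (1:ℝ))] with l hl
    have hpos : (0:ℝ) < |l| ^ p := Real.rpow_pos_of_pos (by linarith) p
    rw [Real.rpow_one, Real.rpow_zero, mul_one, ← add_div, ← add_div]
    exact div_le_div_of_nonneg_right (by linarith [hb l]) hpos.le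

/-- Blumenthal–Getoor asymptotics of a characteristic exponent with no Gaussian component:
for every `η > 0`, as `|λ| → ∞` (the cocompact filter on `ℝ`),
`|Ψ(λ)|/|λ|^{β(Λ)+η} → 0` if `∫_{[-1,1]} |x| Λ(dx) = ∞`, and
`|Ψ(λ)|/|λ|^{1+η} → 0` if `∫_{[-1,1]} |x| Λ(dx) < ∞`. -/
theorem char_exponent_growth
    (a : ℝ) (Λ : Measure ℝ) (hΛ0 : Λ {0} = 0)
    (hΛint : ∫⁻ x : ℝ, ENNReal.ofReal (min (x ^ 2) 1) ∂Λ < ⊤)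
    (Ψ : ℝ → ℂ)
    (hΨ : ∀ l : ℝ, Ψ l = Complex.I * (a : ℂ) * (l : ℂ) +
      ∫ x : ℝ, (Complex.exp (Complex.I * (l : ℂ) * (x : ℂ)) - 1 -
        (if |x| ≤ 1 then Complex.I * (l : ℂ) * (x : ℂ) else 0)) ∂Λ)
    (η : ℝ) (hη : 0 < η) :
    ((∫⁻ x in Set.Icc (-1 : ℝ) 1, ENNReal.ofReal |x| ∂Λ = ⊤ →
        Tendsto (fun l : ℝ => ‖Ψ l‖ / |l| ^ (bgIndex Λ + η)) (cocompact ℝ) (nhds 0)) ∧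
      (∫⁻ x in Set.Icc (-1 : ℝ) 1, ENNReal.ofReal |x| ∂Λ < ⊤ →
        Tendsto (fun l : ℝ => ‖Ψ l‖ / |l| ^ (1 + η)) (cocompact ℝ) (nhds 0))) := by
  set S : Set ℝ :=
    {r : ℝ | 0 < r ∧ ∫⁻ x in Set.Icc (-1 : ℝ) 1, ENNReal.ofReal (|x| ^ r) ∂Λ < ⊤} with hS_def
  have htwo : (2:ℝ) ∈ S := by
    refine ⟨two_pos, ?_⟩
    have hle : ∫⁻ x in Set.Icc (-1 : ℝ) 1, ENNReal.ofReal (|x| ^ (2:ℝ)) ∂Λ ≤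
        ∫⁻ x in Set.Icc (-1 : ℝ) 1, ENNReal.ofReal (min (x ^ 2) 1) ∂Λ := by
      refine setLIntegral_mono' measurableSet_Icc fun x hx => ?_
      have hx1 : |x| ≤ 1 := by rwa [Set.mem_Icc, ← abs_le] at hx
      have h1 : |x| ^ (2:ℝ) = x ^ 2 := by
        rw [show (2:ℝ) = ((2:ℕ):ℝ) by norm_num, Real.rpow_natCast, sq_abs]
      have h2 : x ^ 2 ≤ 1 := by rw [← sq_abs]; nlinarith [abs_nonneg x]
      rw [h1, min_eq_left h2]
    exact lt_of_le_of_lt (hle.trans (setLIntegral_le_lintegral _ _)) hΛint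
  constructor
  · -- case (i)
    intro hinf
    have hsub : ∀ r ∈ S, (1:ℝ) < r := by
      intro r hr
      by_contra hc
      push_neg at hc
      have hmono : ∫⁻ x in Set.Icc (-1 : ℝ) 1, ENNReal.ofReal |x| ∂Λ ≤
          ∫⁻ x in Set.Icc (-1 : ℝ) 1, ENNReal.ofReal (|x| ^ r) ∂Λ := by
        refine setLIntegral_mono' measurableSet_Icc fun x hx => ?_
        have hx1 : |x| ≤ 1 := by rwa [Set.mem_Icc, ← abs_le] at hx
        refine ENNReal.ofReal_le_ofReal ?_
        rcases eq_or_lt_of_le (abs_nonneg x) with h0 | h0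
        · rw [← h0, Real.zero_rpow (by linarith [hr.1])]
        · calc |x| = |x| ^ (1:ℝ) := (Real.rpow_one _).symm
            _ ≤ |x| ^ r := Real.rpow_le_rpow_of_exponent_ge h0 hx1 hc
      rw [hinf, top_le_iff] at hmono
      exact absurd hmono hr.2.ne
    have hβ1 : 1 ≤ bgIndex Λ := le_csInf ⟨2, htwo⟩ fun r hr => (hsub r hr).le
    obtain ⟨r, hrS, hrlt⟩ : ∃ r ∈ S, r < bgIndex Λ + η :=
      exists_lt_of_csInf_lt ⟨2, htwo⟩ (lt_add_of_pos_right _ hη)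
    have hI' : ∫⁻ x in Set.Icc (-1 : ℝ) 1, ENNReal.ofReal (|x| ^ (min r 2)) ∂Λ < ⊤ := by
      rcases le_total r 2 with h | h
      · rw [min_eq_left h]; exact hrS.2
      · rw [min_eq_right h]; exact htwo.2
    exact char_exp_growth_aux a Λ hΛint Ψ hΨ (min r 2) (bgIndex Λ + η)
      (le_min (hsub r hrS).le one_le_two) (min_le_right _ _)
      ((min_le_left _ _).trans_lt hrlt) (by linarith) hI'
  · -- case (ii)
    intro hfin
    refine char_exp_growth_aux a Λ hΛint Ψ hΨ 1 (1 + η) le_rfl one_le_two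
      (by linarith) (by linarith) ?_
    simpa [Real.rpow_one] using hfin
end

section
/- Let p ∈ (0,1) and let Λ be a Lévy measure on ℝ whose Blumenthal–Getoor index satisfies β(Λ) < 1/p. Let η be a Yule–Simon random variable with parameter 1/p, i.e. P(η = k) = p^{-1} B(k, 1/p + 1) for k ≥ 1, and write ⟦y⟧ := y·1_{|y|≤1} for y ∈ ℝ. Then ∫_ℝ E[ | ⟦η·x⟧ − η·⟦x⟧ | ] Λ(dx) < ∞; equivalently, ∑_{k=1}^∞ p^{-1} B(k, 1/p + 1) ∫_ℝ | kx·1_{|kx|≤1} − kx·1_{|x|≤1} | Λ(dx) < ∞. -/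
open MeasureTheory

/-- Key elementary inequality: `k/(k+a) ≤ ((k+a)/(k+a+1))^a`. -/
theorem nrlp_keyIneq (k a : ℝ) (hk : 0 < k) (ha : 1 ≤ a) :
    k / (k + a) ≤ ((k + a) / (k + a + 1)) ^ a := by
  have ha0 : (0:ℝ) < a := by linarith
  have ht : 0 < k + a := by linarith
  have hb : (0:ℝ) < (k + a + 1) / (k + a) := by positivity
  have h1 : ((k + a + 1) / (k + a)) ^ a ≤ (k + a) / k := by
    have hlog : Real.log ((k + a + 1) / (k + a)) ≤ 1 / (k + a) := by
      have h := Real.log_le_sub_one_of_pos hb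
      have he : (k + a + 1) / (k + a) - 1 = 1 / (k + a) := by field_simp; ring
      linarith [he ▸ h]
    have hfrac : a / (k + a) < 1 := by rw [div_lt_one ht]; linarith
    have hpos : 0 < 1 - a / (k + a) := by linarith
    calc ((k + a + 1) / (k + a)) ^ a
        = Real.exp (Real.log ((k + a + 1) / (k + a)) * a) := Real.rpow_def_of_pos hb a
      _ ≤ Real.exp (a / (k + a)) := by
          apply Real.exp_le_exp.2
          calc Real.log ((k + a + 1) / (k + a)) * a ≤ (1 / (k + a)) * a := by
                apply mul_le_mul_of_nonneg_right hlog (le_of_lt ha0)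
            _ = a / (k + a) := by ring
      _ ≤ (1 - a / (k + a))⁻¹ := by
          have h2 := Real.add_one_le_exp (-(a / (k + a)))
          rw [Real.exp_neg] at h2
          have h3 : 1 - a / (k + a) ≤ (Real.exp (a / (k + a)))⁻¹ := by linarith
          calc Real.exp (a / (k + a)) = ((Real.exp (a / (k + a)))⁻¹)⁻¹ := by
                rw [inv_inv]
            _ ≤ (1 - a / (k + a))⁻¹ := by
                apply inv_anti₀ hpos h3
      _ = (k + a) / k := by field_simp; rw [add_sub_cancel_right, div_self (ne_of_gt hk)]
  have hinv : ((k + a) / (k + a + 1)) ^ a = (((k + a + 1) / (k + a)) ^ a)⁻¹ := by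
    rw [← Real.inv_rpow (by positivity), inv_div]
  rw [hinv, le_inv_comm₀ (by positivity) (Real.rpow_pos_of_pos hb a)]
  calc ((k + a + 1) / (k + a)) ^ a ≤ (k + a) / k := h1
    _ = (k / (k + a))⁻¹ := by rw [inv_div]

/-- Gamma-ratio bound: `Γ(n+1)/Γ(n+1+a) ≤ (aΓ(a))⁻¹ ((1+a)/(n+1+a))^a`. -/
theorem nrlp_gammaRatio (a : ℝ) (ha : 1 ≤ a) (n : ℕ) :
    Real.Gamma ((n:ℝ) + 1) / Real.Gamma ((n:ℝ) + 1 + a) ≤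
      (a * Real.Gamma a)⁻¹ * ((1 + a) / ((n:ℝ) + 1 + a)) ^ a := by
  have ha0 : (0:ℝ) < a := by linarith
  have hGa : 0 < Real.Gamma a := Real.Gamma_pos_of_pos ha0
  induction n with
  | zero =>
      simp only [Nat.cast_zero, zero_add]
      rw [Real.Gamma_one, show (1:ℝ)+a = a+1 by ring, Real.Gamma_add_one (ne_of_gt ha0),
        div_self (by positivity : (a+1:ℝ) ≠ 0), Real.one_rpow, mul_one, one_div]
  | succ n ih =>
      have hk : (0:ℝ) < (n:ℝ) + 1 := by positivity
      have ht : (0:ℝ) < (n:ℝ) + 1 + a := by linarith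
      have e1 : ((n+1:ℕ):ℝ) + 1 = ((n:ℝ) + 1) + 1 := by push_cast; ring
      have e2 : ((n:ℝ) + 1) + 1 + a = ((n:ℝ) + 1 + a) + 1 := by ring
      rw [e1, e2, Real.Gamma_add_one (ne_of_gt hk), Real.Gamma_add_one (ne_of_gt ht)]
      have hGn : 0 < Real.Gamma ((n:ℝ) + 1) := Real.Gamma_pos_of_pos hk
      have hGna : 0 < Real.Gamma ((n:ℝ) + 1 + a) := Real.Gamma_pos_of_pos ht
      have step : (((n:ℝ) + 1) * Real.Gamma ((n:ℝ)+1)) / (((n:ℝ) + 1 + a) * Real.Gamma ((n:ℝ)+1+a))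
          = (Real.Gamma ((n:ℝ)+1) / Real.Gamma ((n:ℝ)+1+a)) * (((n:ℝ)+1) / ((n:ℝ)+1+a)) := by
        field_simp
      rw [step]
      have hki := nrlp_keyIneq ((n:ℝ)+1) a hk ha
      calc (Real.Gamma ((n:ℝ)+1) / Real.Gamma ((n:ℝ)+1+a)) * (((n:ℝ)+1) / ((n:ℝ)+1+a))
          ≤ ((a * Real.Gamma a)⁻¹ * ((1 + a) / ((n:ℝ) + 1 + a)) ^ a) *
            ((((n:ℝ)+1+a) / ((n:ℝ)+1+a+1)) ^ a) := by
            apply mul_le_mul ih hki (by positivity)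
            positivity
        _ = (a * Real.Gamma a)⁻¹ * (((1 + a) / ((n:ℝ) + 1 + a)) * (((n:ℝ)+1+a) / ((n:ℝ)+1+a+1))) ^ a := by
            rw [Real.mul_rpow (by positivity) (by positivity)]; ring
        _ = (a * Real.Gamma a)⁻¹ * ((1 + a) / ((n:ℝ)+1+a+1)) ^ a := by
            have hne : ((n:ℝ)+1+a) ≠ 0 := ne_of_gt ht
            have heq : (1 + a) / ((n:ℝ) + 1 + a) * (((n:ℝ)+1+a) / ((n:ℝ)+1+a+1)) =
                (1 + a) / ((n:ℝ)+1+a+1) := by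
              rw [div_mul_div_comm,
                div_eq_div_iff (by positivity) (by positivity : ((n:ℝ)+1+a+1) ≠ 0)]
              ring
            rw [heq]

/-- The inner integral bound: `∫ |⟦kx⟧ - k⟦x⟧| dΛ ≤ k^r ∫_{[-1,1]} |x|^r dΛ`. -/
theorem nrlp_innerBound (Λ : Measure ℝ) (r : ℝ) (hr1 : 1 ≤ r) (n : ℕ) :
    ∫⁻ x : ℝ, ENNReal.ofReal
        |(if |((n : ℝ) + 1) * x| ≤ 1 then ((n : ℝ) + 1) * x else 0) -
          ((n : ℝ) + 1) * (if |x| ≤ 1 then x else 0)| ∂Λ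
      ≤ ENNReal.ofReal (((n:ℝ)+1) ^ r) *
        ∫⁻ x in Set.Icc (-1 : ℝ) 1, ENNReal.ofReal (|x| ^ r) ∂Λ := by
  set k : ℝ := (n:ℝ) + 1 with hk_def
  have hk1 : 1 ≤ k := by rw [hk_def]; linarith [Nat.cast_nonneg (α := ℝ) n]
  have hk0 : 0 < k := lt_of_lt_of_le one_pos hk1
  have hptwise : ∀ x : ℝ, ENNReal.ofReal |(if |k * x| ≤ 1 then k * x else 0) - k * (if |x| ≤ 1 then x else 0)|
      ≤ (Set.Icc (-1:ℝ) 1).indicator (fun x => ENNReal.ofReal (k ^ r * |x| ^ r)) x := by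
    intro x
    by_cases hx : x ∈ Set.Icc (-1:ℝ) 1
    · rw [Set.indicator_of_mem hx]
      have hx1 : |x| ≤ 1 := abs_le.2 ⟨hx.1, hx.2⟩
      rw [if_pos hx1]
      by_cases hkx : |k * x| ≤ 1
      · rw [if_pos hkx, sub_self, abs_zero]
        simp
      · rw [if_neg hkx, zero_sub, abs_neg]
        apply ENNReal.ofReal_le_ofReal
        have h1 : 1 ≤ |k * x| := le_of_not_ge hkx
        calc |k * x| = |k * x| ^ (1:ℝ) := (Real.rpow_one _).symm
          _ ≤ |k * x| ^ r := Real.rpow_le_rpow_of_exponent_le h1 hr1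
          _ = (k * |x|) ^ r := by rw [abs_mul, abs_of_pos hk0]
          _ = k ^ r * |x| ^ r := Real.mul_rpow (le_of_lt hk0) (abs_nonneg x)
    · rw [Set.indicator_of_notMem hx]
      have hx1 : 1 < |x| := by
        rcases lt_or_ge 1 |x| with h | h
        · exact h
        · exact absurd (abs_le.1 h) (by simpa [Set.mem_Icc] using hx)
      have hkx : ¬ |k * x| ≤ 1 := by
        rw [abs_mul, abs_of_pos hk0]
        nlinarith
      rw [if_neg hkx, if_neg (not_le.2 hx1), mul_zero, sub_zero, abs_zero]
      simp
  calc ∫⁻ x : ℝ, ENNReal.ofReal |(if |k * x| ≤ 1 then k * x else 0) - k * (if |x| ≤ 1 then x else 0)| ∂Λ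
      ≤ ∫⁻ x : ℝ, (Set.Icc (-1:ℝ) 1).indicator (fun x => ENNReal.ofReal (k ^ r * |x| ^ r)) x ∂Λ :=
        lintegral_mono hptwise
    _ = ∫⁻ x in Set.Icc (-1:ℝ) 1, ENNReal.ofReal (k ^ r * |x| ^ r) ∂Λ :=
        lintegral_indicator measurableSet_Icc _
    _ = ∫⁻ x in Set.Icc (-1:ℝ) 1, ENNReal.ofReal (k ^ r) * ENNReal.ofReal (|x| ^ r) ∂Λ := by
        apply lintegral_congr
        intro x
        rw [ENNReal.ofReal_mul (by positivity)]
    _ = ENNReal.ofReal (k ^ r) * ∫⁻ x in Set.Icc (-1:ℝ) 1, ENNReal.ofReal (|x| ^ r) ∂Λ := by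
        apply lintegral_const_mul
        fun_prop

/-- Bound on the Yule–Simon pmf: `f_p(n+1) ≤ (p⁻¹/a)(1+a)^a (n+1)^(-a)` where `a = 1/p+1`. -/
theorem nrlp_pmfBound (p : ℝ) (hp0 : 0 < p) (hp1 : p < 1) (n : ℕ) :
    yuleSimonPMF p (n+1) ≤ (p⁻¹ / (1/p+1) * (1+(1/p+1)) ^ (1/p+1)) * ((n:ℝ)+1) ^ (-(1/p+1)) := by
  set a : ℝ := 1/p + 1 with ha_def
  have hp' : 1 < 1/p := one_lt_one_div hp0 hp1
  have ha1 : 1 ≤ a := by rw [ha_def]; linarith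
  have ha0 : 0 < a := by linarith
  have hGa : 0 < Real.Gamma a := Real.Gamma_pos_of_pos ha0
  have hk0 : (0:ℝ) < (n:ℝ) + 1 := by positivity
  have hcast : ((n+1:ℕ):ℝ) = (n:ℝ) + 1 := by push_cast; ring
  have harg : ((n+1:ℕ):ℝ) + 1/p + 1 = (n:ℝ) + 1 + a := by rw [hcast, ha_def]; ring
  have hpmf : yuleSimonPMF p (n+1) =
      p⁻¹ * Real.Gamma a * (Real.Gamma ((n:ℝ)+1) / Real.Gamma ((n:ℝ)+1+a)) := by
    rw [yuleSimonPMF, harg, hcast, ha_def]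
    ring
  rw [hpmf]
  have h1 := nrlp_gammaRatio a ha1 n
  have hp_inv : (0:ℝ) < p⁻¹ := by positivity
  calc p⁻¹ * Real.Gamma a * (Real.Gamma ((n:ℝ)+1) / Real.Gamma ((n:ℝ)+1+a))
      ≤ p⁻¹ * Real.Gamma a * ((a * Real.Gamma a)⁻¹ * ((1 + a) / ((n:ℝ) + 1 + a)) ^ a) := by
        apply mul_le_mul_of_nonneg_left h1 (by positivity)
    _ = p⁻¹ / a * ((1 + a) / ((n:ℝ) + 1 + a)) ^ a := by
        field_simp
    _ ≤ p⁻¹ / a * ((1 + a) / ((n:ℝ) + 1)) ^ a := by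
        apply mul_le_mul_of_nonneg_left _ (by positivity)
        apply Real.rpow_le_rpow (by positivity) _ (le_of_lt ha0)
        apply div_le_div_of_nonneg_left (by linarith) hk0 (by linarith)
    _ = (p⁻¹ / a * (1+a) ^ a) * ((n:ℝ)+1) ^ (-a) := by
        rw [Real.div_rpow (by linarith) (le_of_lt hk0), Real.rpow_neg (le_of_lt hk0),
          div_eq_mul_inv]
        ring

/-- For an admissible memory parameter (`β(Λ) < 1/p`), writing `⟦y⟧ = y·1_{|y|≤1}` and
`η` a Yule–Simon variable with parameter `1/p`,
`∑_{k≥1} f_p(k) ∫ |⟦kx⟧ − k⟦x⟧| Λ(dx) < ∞`. -/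
theorem nrlp_drift_correction_integrable
    (p : ℝ) (hp0 : 0 < p) (hp1 : p < 1)
    (Λ : Measure ℝ) (hΛ0 : Λ {0} = 0)
    (hΛint : ∫⁻ x : ℝ, ENNReal.ofReal (min (x ^ 2) 1) ∂Λ < ⊤)
    (hBG : bgIndex Λ < 1 / p) :
    ∑' n : ℕ, ENNReal.ofReal (yuleSimonPMF p (n + 1)) *
      ∫⁻ x : ℝ, ENNReal.ofReal
        |(if |((n : ℝ) + 1) * x| ≤ 1 then ((n : ℝ) + 1) * x else 0) -
          ((n : ℝ) + 1) * (if |x| ≤ 1 then x else 0)| ∂Λ < ⊤ := by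
  have hp' : 1 < 1/p := one_lt_one_div hp0 hp1
  set a : ℝ := 1/p + 1 with ha_def
  have ha1 : 1 ≤ a := by rw [ha_def]; linarith
  -- membership of 2 in the BG set
  have h2S : (2:ℝ) ∈ {r : ℝ | 0 < r ∧ ∫⁻ x in Set.Icc (-1 : ℝ) 1, ENNReal.ofReal (|x| ^ r) ∂Λ < ⊤} := by
    refine ⟨two_pos, ?_⟩
    have hcongr : ∫⁻ x in Set.Icc (-1 : ℝ) 1, ENNReal.ofReal (|x| ^ (2:ℝ)) ∂Λ
        = ∫⁻ x in Set.Icc (-1 : ℝ) 1, ENNReal.ofReal (min (x ^ 2) 1) ∂Λ := by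
      apply setLIntegral_congr_fun measurableSet_Icc
      intro x hx
      show ENNReal.ofReal (|x| ^ (2:ℝ)) = ENNReal.ofReal (min (x ^ 2) 1)
      have hx1 : |x| ≤ 1 := abs_le.2 ⟨hx.1, hx.2⟩
      have h1 : |x| ^ (2:ℝ) = x ^ 2 := by
        rw [show (2:ℝ) = ((2:ℕ):ℝ) by norm_num, Real.rpow_natCast, sq_abs]
      have h2 : x ^ 2 ≤ 1 := by rw [← sq_abs]; nlinarith [abs_nonneg x]
      rw [h1, min_eq_left h2]
    rw [hcongr]
    exact lt_of_le_of_lt (setLIntegral_le_lintegral _ _) hΛint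
  rw [bgIndex] at hBG
  obtain ⟨s, hsS, hs⟩ := exists_lt_of_csInf_lt ⟨2, h2S⟩ hBG
  set r : ℝ := max s 1 with hr_def
  have hr1 : 1 ≤ r := le_max_right s 1
  have hrp : r < 1/p := max_lt hs hp'
  have hrS : ∫⁻ x in Set.Icc (-1 : ℝ) 1, ENNReal.ofReal (|x| ^ r) ∂Λ < ⊤ := by
    refine lt_of_le_of_lt (lintegral_mono_ae ?_) hsS.2
    rw [ae_restrict_iff' measurableSet_Icc]
    filter_upwards with x hx
    have hx1 : |x| ≤ 1 := abs_le.2 ⟨hx.1, hx.2⟩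
    apply ENNReal.ofReal_le_ofReal
    rcases eq_or_ne x 0 with h0 | h0
    · subst h0
      simp [Real.zero_rpow (ne_of_gt hsS.1),
        (Real.zero_rpow (ne_of_gt (lt_of_lt_of_le hsS.1 (le_max_left s 1))) : (0:ℝ) ^ r = 0)]
    · exact Real.rpow_le_rpow_of_exponent_ge (abs_pos.2 h0) hx1 (le_max_left s 1)
  set C : ENNReal := ∫⁻ x in Set.Icc (-1 : ℝ) 1, ENNReal.ofReal (|x| ^ r) ∂Λ with hC_def
  set D : ℝ := p⁻¹ / a * (1+a) ^ a with hD_def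
  have hD0 : 0 ≤ D := by
    rw [hD_def]
    have : 0 < a := by linarith
    positivity
  -- per-term bound
  have hterm : ∀ n : ℕ, ENNReal.ofReal (yuleSimonPMF p (n + 1)) *
      (∫⁻ x : ℝ, ENNReal.ofReal
        |(if |((n : ℝ) + 1) * x| ≤ 1 then ((n : ℝ) + 1) * x else 0) -
          ((n : ℝ) + 1) * (if |x| ≤ 1 then x else 0)| ∂Λ)
      ≤ ENNReal.ofReal (D * ((n:ℝ)+1) ^ (r - a)) * C := by
    intro n
    have hk0 : (0:ℝ) < (n:ℝ) + 1 := by positivity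
    have h1 : ENNReal.ofReal (yuleSimonPMF p (n + 1)) ≤ ENNReal.ofReal (D * ((n:ℝ)+1) ^ (-a)) := by
      apply ENNReal.ofReal_le_ofReal
      have := nrlp_pmfBound p hp0 hp1 n
      rw [hD_def, ha_def]
      exact this
    have h2 := nrlp_innerBound Λ r hr1 n
    calc ENNReal.ofReal (yuleSimonPMF p (n + 1)) * _
        ≤ ENNReal.ofReal (D * ((n:ℝ)+1) ^ (-a)) * (ENNReal.ofReal (((n:ℝ)+1) ^ r) * C) :=
          mul_le_mul' h1 h2
      _ = ENNReal.ofReal (D * ((n:ℝ)+1) ^ (-a) * ((n:ℝ)+1) ^ r) * C := by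
          rw [← mul_assoc, ← ENNReal.ofReal_mul (by positivity)]
      _ = ENNReal.ofReal (D * ((n:ℝ)+1) ^ (r - a)) * C := by
          congr 2
          rw [mul_assoc, ← Real.rpow_add hk0]
          congr 1
          ring
  -- summability of the series of coefficients
  have hsum : Summable (fun n : ℕ => D * ((n:ℝ)+1) ^ (r - a)) := by
    apply Summable.mul_left
    have hexp : r - a < -1 := by rw [ha_def]; linarith
    have h := (summable_nat_add_iff 1).2 (Real.summable_nat_rpow.2 hexp)
    convert h using 2 with n
    · rfl
    push_cast
    rfl
  calc ∑' n : ℕ, ENNReal.ofReal (yuleSimonPMF p (n + 1)) *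
      ∫⁻ x : ℝ, ENNReal.ofReal
        |(if |((n : ℝ) + 1) * x| ≤ 1 then ((n : ℝ) + 1) * x else 0) -
          ((n : ℝ) + 1) * (if |x| ≤ 1 then x else 0)| ∂Λ
      ≤ ∑' n : ℕ, ENNReal.ofReal (D * ((n:ℝ)+1) ^ (r - a)) * C := ENNReal.tsum_le_tsum hterm
    _ = (∑' n : ℕ, ENNReal.ofReal (D * ((n:ℝ)+1) ^ (r - a))) * C := ENNReal.tsum_mul_right
    _ = ENNReal.ofReal (∑' n : ℕ, D * ((n:ℝ)+1) ^ (r - a)) * C := by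
        rw [ENNReal.ofReal_tsum_of_nonneg (fun n => by positivity) hsum]
    _ < ⊤ := ENNReal.mul_lt_top ENNReal.ofReal_lt_top hrS
end

section
/- Let p ∈ (0,1) and let Λ be a Lévy measure on ℝ whose Blumenthal–Getoor index satisfies β(Λ) < 1/p. Then ∑_{k=1}^∞ p^{-1} B(k, 1/p + 1) ∫_ℝ min(k²x², 1) Λ(dx) < ∞. Equivalently, the image of the measure f_p ⊗ Λ under (k, x) ↦ k·x, where f_p is the Yule–Simon mass function with parameter 1/p, is again a Lévy measure. -/
open MeasureTheory

lemma wendel (x σ : ℝ) (hx : 0 < x) (h0 : 0 ≤ σ) (h1 : σ ≤ 1) :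
    x * Real.Gamma x ≤ Real.Gamma (x + σ) * (x + σ) ^ (1 - σ) := by
  have ha : (0:ℝ) < x + σ := by linarith
  have hb : (0:ℝ) < x + σ + 1 := by linarith
  have hΓa := Real.Gamma_pos_of_pos ha
  have hΓb := Real.Gamma_pos_of_pos hb
  have key := Real.convexOn_log_Gamma.2 (Set.mem_Ioi.2 ha) (Set.mem_Ioi.2 hb) h0
    (by linarith : (0:ℝ) ≤ 1 - σ) (by ring)
  have harg : σ • (x + σ) + (1 - σ) • (x + σ + 1) = x + 1 := by
    simp only [smul_eq_mul]; ring
  rw [harg] at key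
  simp only [Function.comp_apply, smul_eq_mul] at key
  have hx1 : (0:ℝ) < x + 1 := by linarith
  have hΓx1 := Real.Gamma_pos_of_pos hx1
  have := Real.exp_le_exp.2 key
  rw [Real.exp_log hΓx1, Real.exp_add] at this
  rw [Real.Gamma_add_one hx.ne'] at this
  calc x * Real.Gamma x ≤ Real.exp (σ * Real.log (Real.Gamma (x+σ))) *
        Real.exp ((1-σ) * Real.log (Real.Gamma (x+σ+1))) := this
    _ = Real.Gamma (x+σ) ^ σ * Real.Gamma (x+σ+1) ^ (1-σ) := by
        rw [Real.rpow_def_of_pos hΓa, Real.rpow_def_of_pos hΓb, mul_comm σ, mul_comm (1-σ)]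
    _ = Real.Gamma (x+σ) * (x+σ) ^ (1-σ) := by
        rw [show x + σ + 1 = (x+σ) + 1 from rfl, Real.Gamma_add_one ha.ne',
          Real.mul_rpow ha.le hΓa.le,
          show Real.Gamma (x+σ) ^ σ * ((x+σ) ^ (1-σ) * Real.Gamma (x+σ) ^ (1-σ)) =
            (Real.Gamma (x+σ) ^ σ * Real.Gamma (x+σ) ^ (1-σ)) * (x+σ) ^ (1-σ) by ring,
          ← Real.rpow_add hΓa, show σ + (1-σ) = (1:ℝ) by ring, Real.rpow_one]

lemma gamma_lower_aux (x s : ℝ) (hx : 1 ≤ x) (h0 : 0 ≤ s) (h1 : s ≤ 1) :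
    Real.Gamma x * x ^ s ≤ 2 * Real.Gamma (x + s) := by
  have hx0 : (0:ℝ) < x := by linarith
  have hxs : (0:ℝ) < x + s := by linarith
  have w := wendel x s hx0 h0 h1
  have hpow : (x + s) ^ (1 - s) * x ^ (s - 1) ≤ 2 := by
    have h2 : (x + s) ^ (1-s) ≤ (x+1) ^ (1-s) :=
      Real.rpow_le_rpow hxs.le (by linarith) (by linarith)
    have h3 : x ^ (s-1) = (x ^ (1-s))⁻¹ := by
      rw [show s - 1 = -(1-s) by ring, Real.rpow_neg hx0.le]
    have h4 : (x+1) ^ (1-s) * (x ^ (1-s))⁻¹ = ((x+1)/x) ^ (1-s) := by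
      rw [Real.div_rpow (by linarith) hx0.le]; ring
    have h5 : ((x+1)/x) ^ (1-s) ≤ (x+1)/x := by
      have h6 : (1:ℝ) ≤ (x+1)/x := by
        rw [le_div_iff₀ hx0]; linarith
      calc ((x+1)/x) ^ (1-s) ≤ ((x+1)/x) ^ (1:ℝ) :=
            Real.rpow_le_rpow_of_exponent_le h6 (by linarith)
        _ = (x+1)/x := Real.rpow_one _
    have h7 : (x+1)/x ≤ 2 := by rw [div_le_iff₀ hx0]; linarith
    have hxp : 0 ≤ x ^ (s-1) := Real.rpow_nonneg hx0.le _
    calc (x + s) ^ (1-s) * x ^ (s-1) ≤ (x+1) ^ (1-s) * x ^ (s-1) :=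
          mul_le_mul_of_nonneg_right h2 hxp
      _ = ((x+1)/x) ^ (1-s) := by rw [h3, h4]
      _ ≤ 2 := h5.trans h7
  have hΓxs := Real.Gamma_pos_of_pos hxs
  have hxsplit : x ^ s = x * x ^ (s-1) := by
    rw [show s = 1 + (s-1) by ring]
    rw [Real.rpow_add hx0, Real.rpow_one]
    ring_nf
  calc Real.Gamma x * x ^ s = (x * Real.Gamma x) * x ^ (s-1) := by
        rw [hxsplit]; ring
    _ ≤ (Real.Gamma (x+s) * (x+s) ^ (1-s)) * x ^ (s-1) :=
        mul_le_mul_of_nonneg_right w (Real.rpow_nonneg hx0.le _)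
    _ = Real.Gamma (x+s) * ((x+s) ^ (1-s) * x ^ (s-1)) := by ring
    _ ≤ Real.Gamma (x+s) * 2 := mul_le_mul_of_nonneg_left hpow hΓxs.le
    _ = 2 * Real.Gamma (x+s) := mul_comm _ _

lemma gamma_lower_nat : ∀ (n : ℕ) (s : ℝ), 0 ≤ s → s ≤ (n:ℝ) + 1 → ∀ x : ℝ, 1 ≤ x →
    Real.Gamma x * x ^ s ≤ 2 * Real.Gamma (x + s) := by
  intro n
  induction n with
  | zero => intro s h0 h1 x hx; exact gamma_lower_aux x s hx h0 (by simpa using h1)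
  | succ m ih =>
    intro s h0 h1 x hx
    rcases le_or_gt s 1 with hs1 | hs1
    · exact gamma_lower_aux x s hx h0 hs1
    · have hx0 : (0:ℝ) < x := by linarith
      have h0' : 0 ≤ s - 1 := by linarith
      have h1' : s - 1 ≤ (m:ℝ) + 1 := by push_cast at h1 ⊢; linarith
      have ihx := ih (s-1) h0' h1' x hx
      have hxs1 : (0:ℝ) < x + (s-1) := by linarith
      have hΓ := Real.Gamma_pos_of_pos hxs1
      have hsplit : x ^ s = x ^ (s-1) * x := by
        have h := Real.rpow_add hx0 (s-1) 1
        rw [Real.rpow_one, show s-1+1 = s by ring] at h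
        exact h
      have hstep : Real.Gamma (x + (s-1)) * x ≤ Real.Gamma (x + s) := by
        have : Real.Gamma (x + s) = (x + (s-1)) * Real.Gamma (x + (s-1)) := by
          rw [show x + s = (x + (s-1)) + 1 by ring, Real.Gamma_add_one hxs1.ne']
        rw [this]
        have : x ≤ x + (s-1) := by linarith
        nlinarith
      calc Real.Gamma x * x ^ s = (Real.Gamma x * x ^ (s-1)) * x := by rw [hsplit]; ring
        _ ≤ (2 * Real.Gamma (x + (s-1))) * x := mul_le_mul_of_nonneg_right ihx hx0.le
        _ = 2 * (Real.Gamma (x + (s-1)) * x) := by ring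
        _ ≤ 2 * Real.Gamma (x + s) := by linarith [hstep]

lemma gamma_lower (s x : ℝ) (h0 : 0 ≤ s) (hx : 1 ≤ x) :
    Real.Gamma x * x ^ s ≤ 2 * Real.Gamma (x + s) := by
  exact gamma_lower_nat ⌈s⌉₊ s h0 (by push_cast; linarith [Nat.le_ceil s]) x hx


lemma yuleSimon_bound (p : ℝ) (hp0 : 0 < p) (n : ℕ) :
    yuleSimonPMF p (n + 1) ≤
      (2 * p⁻¹ * Real.Gamma (1/p + 1)) * ((n:ℝ) + 1) ^ (-(1/p + 1)) := by
  set s : ℝ := 1/p + 1 with hs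
  have hs0 : 0 < s := by positivity
  set k : ℝ := (n:ℝ) + 1 with hk
  have hk1 : (1:ℝ) ≤ k := by have : (0:ℝ) ≤ (n:ℝ) := Nat.cast_nonneg n; linarith
  have hk0 : (0:ℝ) < k := by linarith
  have hks : (0:ℝ) < k + s := by linarith
  have hΓks := Real.Gamma_pos_of_pos hks
  have hΓs := Real.Gamma_pos_of_pos hs0
  have hΓk := Real.Gamma_pos_of_pos hk0
  have hb := gamma_lower s k hs0.le hk1
  have hcast : ((n+1 : ℕ) : ℝ) = k := by push_cast; ring
  have harg : k + 1/p + 1 = k + s := by rw [hs]; ring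
  rw [yuleSimonPMF, hcast, harg]
  have hkey : Real.Gamma k * Real.Gamma s / Real.Gamma (k + s) ≤
      2 * Real.Gamma s * k ^ (-s) := by
    rw [div_le_iff₀ hΓks]
    have hkpow : (0:ℝ) < k ^ (-s) := Real.rpow_pos_of_pos hk0 _
    have h1 : Real.Gamma k * k ^ s * (Real.Gamma s * k ^ (-s)) ≤
        2 * Real.Gamma (k + s) * (Real.Gamma s * k ^ (-s)) := by
      apply mul_le_mul_of_nonneg_right hb; positivity
    have h2 : k ^ s * k ^ (-s) = 1 := by
      rw [← Real.rpow_add hk0]; simp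
    have h3 : Real.Gamma k * Real.Gamma s =
        Real.Gamma k * k ^ s * (Real.Gamma s * k ^ (-s)) := by
      rw [show Real.Gamma k * k ^ s * (Real.Gamma s * k ^ (-s)) =
        Real.Gamma k * Real.Gamma s * (k ^ s * k ^ (-s)) by ring, h2, mul_one]
    calc Real.Gamma k * Real.Gamma s
        = Real.Gamma k * k ^ s * (Real.Gamma s * k ^ (-s)) := h3
      _ ≤ 2 * Real.Gamma (k + s) * (Real.Gamma s * k ^ (-s)) := h1
      _ = 2 * Real.Gamma s * k ^ (-s) * Real.Gamma (k + s) := by ring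
  calc p⁻¹ * (Real.Gamma k * Real.Gamma s / Real.Gamma (k + s))
      ≤ p⁻¹ * (2 * Real.Gamma s * k ^ (-s)) := by
        apply mul_le_mul_of_nonneg_left hkey; positivity
    _ = 2 * p⁻¹ * Real.Gamma s * k ^ (-s) := by ring

lemma min_sq_le_rpow (k x q : ℝ) (hk : 1 ≤ k) (hq0 : 0 < q) (hq2 : q ≤ 2) :
    min (k ^ 2 * x ^ 2) 1 ≤ k ^ q * |x| ^ q := by
  have hk0 : (0:ℝ) ≤ k := by linarith
  set a : ℝ := k * |x| with ha
  have ha0 : 0 ≤ a := by positivity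
  have hsq : k ^ 2 * x ^ 2 = a ^ 2 := by rw [ha, mul_pow, sq_abs]
  have hmr : k ^ q * |x| ^ q = a ^ q := (Real.mul_rpow hk0 (abs_nonneg x)).symm
  rw [hsq, hmr]
  rcases le_or_gt a 1 with h | h
  · rcases eq_or_lt_of_le ha0 with h0 | h0
    · simp [← h0, Real.zero_rpow hq0.ne']
    · calc min (a ^ 2) 1 ≤ a ^ 2 := min_le_left _ _
        _ = a ^ (2:ℝ) := by rw [← Real.rpow_natCast a 2]; norm_num
        _ ≤ a ^ q := Real.rpow_le_rpow_of_exponent_ge h0 h hq2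
  · calc min (a ^ 2) 1 ≤ 1 := min_le_right _ _
      _ = (1:ℝ) ^ q := (Real.one_rpow q).symm
      _ ≤ a ^ q := Real.rpow_le_rpow zero_le_one h.le hq0.le

lemma tsum_ofReal_rpow_lt_top (c t : ℝ) (ht : t < -1) :
    ∑' n : ℕ, ENNReal.ofReal (c * ((n:ℝ) + 1) ^ t) < ⊤ := by
  have h1 : Summable (fun n : ℕ => ((n:ℝ)) ^ t) := Real.summable_nat_rpow.mpr ht
  have h2 : Summable (fun n : ℕ => (((n+1 : ℕ)):ℝ) ^ t) := by
    exact (summable_nat_add_iff 1).mpr h1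
  have h3 : Summable (fun n : ℕ => c * (((n:ℝ)) + 1) ^ t) := by
    have := h2.mul_left c
    convert this using 2 with n
    push_cast
    exact rfl
    push_cast
    ring_nf
  rcases le_or_gt c 0 with hc | hc
  · have : ∀ n : ℕ, ENNReal.ofReal (c * ((n:ℝ) + 1) ^ t) = 0 := by
      intro n
      apply ENNReal.ofReal_eq_zero.mpr
      have : (0:ℝ) ≤ ((n:ℝ)+1) ^ t := Real.rpow_nonneg (by positivity) _
      nlinarith
    simp [this]
  · rw [← ENNReal.ofReal_tsum_of_nonneg (fun n => by positivity) h3]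
    exact ENNReal.ofReal_lt_top

/-- Integrability half of Lemma 8.4 (ii): if `β(Λ) < 1/p` then
`∑_{k≥1} f_p(k) ∫ min(k²x², 1) Λ(dx) < ∞`, i.e. the image of `f_p ⊗ Λ` under
`(k,x) ↦ kx` is again a Lévy measure. -/
theorem nrlp_path_levy_measure_integrable
    (p : ℝ) (hp0 : 0 < p) (hp1 : p < 1)
    (Λ : Measure ℝ) (hΛ0 : Λ {0} = 0)
    (hΛint : ∫⁻ x : ℝ, ENNReal.ofReal (min (x ^ 2) 1) ∂Λ < ⊤)
    (hBG : bgIndex Λ < 1 / p) :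
    ∑' n : ℕ, ENNReal.ofReal (yuleSimonPMF p (n + 1)) *
      ∫⁻ x : ℝ, ENNReal.ofReal (min ((((n : ℝ) + 1) ^ 2 * x ^ 2)) 1) ∂Λ < ⊤ := by
  set S : Set ℝ :=
    {r : ℝ | 0 < r ∧ ∫⁻ x in Set.Icc (-1 : ℝ) 1, ENNReal.ofReal (|x| ^ r) ∂Λ < ⊤} with hS
  -- 2 ∈ S
  have hIccMeas : MeasurableSet (Set.Icc (-1 : ℝ) 1) := measurableSet_Icc
  have hsqIcc : ∀ x ∈ Set.Icc (-1:ℝ) 1, |x| ^ (2:ℝ) = min (x ^ 2) 1 := by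
    intro x hx
    rcases hx with ⟨h1, h2⟩
    have habs : |x| ≤ 1 := abs_le.mpr ⟨h1, h2⟩
    have hx2 : x ^ 2 ≤ 1 := by nlinarith [abs_nonneg x, sq_abs x]
    rw [min_eq_left hx2, show (2:ℝ) = ((2:ℕ):ℝ) by norm_num, Real.rpow_natCast, sq_abs]
  have h2S : (2:ℝ) ∈ S := by
    refine ⟨by norm_num, ?_⟩
    have hle : ∫⁻ x in Set.Icc (-1:ℝ) 1, ENNReal.ofReal (|x| ^ (2:ℝ)) ∂Λ ≤
        ∫⁻ x : ℝ, ENNReal.ofReal (min (x ^ 2) 1) ∂Λ := by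
      rw [← lintegral_indicator hIccMeas _]
      apply lintegral_mono
      intro x
      by_cases hx : x ∈ Set.Icc (-1:ℝ) 1
      · rw [Set.indicator_of_mem hx, hsqIcc x hx]
      · rw [Set.indicator_of_notMem hx]; exact zero_le
    exact lt_of_le_of_lt hle hΛint
  -- extract r from the infimum condition
  rw [bgIndex] at hBG
  obtain ⟨r, hrS, hr⟩ := exists_lt_of_csInf_lt ⟨2, h2S⟩ hBG
  set q : ℝ := min r 2 with hq
  have hq0 : 0 < q := lt_min hrS.1 (by norm_num)
  have hq2 : q ≤ 2 := min_le_right _ _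
  have hqp : q < 1 / p := lt_of_le_of_lt (min_le_left _ _) hr
  have hqS : q ∈ S := by
    rcases le_total r 2 with h | h
    · rw [hq, min_eq_left h]; exact hrS
    · rw [hq, min_eq_right h]; exact h2S
  set C₁ := ∫⁻ x in Set.Icc (-1:ℝ) 1, ENNReal.ofReal (|x| ^ q) ∂Λ with hC₁def
  have hC₁ : C₁ < ⊤ := hqS.2
  set C₂ := Λ (Set.Icc (-1:ℝ) 1)ᶜ with hC₂def
  have hC₂ : C₂ < ⊤ := by
    have hle : C₂ ≤ ∫⁻ x : ℝ, ENNReal.ofReal (min (x ^ 2) 1) ∂Λ := by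
      rw [hC₂def, ← setLIntegral_one, ← lintegral_indicator hIccMeas.compl _]
      apply lintegral_mono
      intro x
      by_cases hx : x ∈ (Set.Icc (-1:ℝ) 1)ᶜ
      · rw [Set.indicator_of_mem hx]
        have habs : 1 < |x| := by
          by_contra h
          exact hx (abs_le.mp (not_lt.mp h))
        have hx2 : (1:ℝ) ≤ x ^ 2 := by nlinarith [sq_abs x]
        show (1:ENNReal) ≤ ENNReal.ofReal (min (x ^ 2) 1)
        rw [min_eq_right hx2]
        simp
      · rw [Set.indicator_of_notMem hx]; exact zero_le
    exact lt_of_le_of_lt hle hΛint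
  -- integral bound
  have hInt : ∀ n : ℕ,
      (∫⁻ x : ℝ, ENNReal.ofReal (min ((((n : ℝ) + 1) ^ 2 * x ^ 2)) 1) ∂Λ) ≤
      ENNReal.ofReal (((n:ℝ) + 1) ^ q) * C₁ + C₂ := by
    intro n
    set k : ℝ := (n:ℝ) + 1 with hkdef
    have hk1 : (1:ℝ) ≤ k := by
      have : (0:ℝ) ≤ (n:ℝ) := Nat.cast_nonneg n; rw [hkdef]; linarith
    have hk0 : (0:ℝ) < k := by linarith
    rw [← lintegral_add_compl (fun x => ENNReal.ofReal (min ((k ^ 2 * x ^ 2)) 1)) hIccMeas]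
    apply add_le_add
    · calc ∫⁻ x in Set.Icc (-1:ℝ) 1, ENNReal.ofReal (min ((k ^ 2 * x ^ 2)) 1) ∂Λ
          ≤ ∫⁻ x in Set.Icc (-1:ℝ) 1, ENNReal.ofReal (k ^ q * |x| ^ q) ∂Λ := by
            apply lintegral_mono
            intro x
            exact ENNReal.ofReal_le_ofReal (min_sq_le_rpow k x q hk1 hq0 hq2)
        _ = ENNReal.ofReal (k ^ q) * C₁ := by
            rw [hC₁def, ← lintegral_const_mul' _ _ ENNReal.ofReal_ne_top]
            congr 1
            ext x
            rw [← ENNReal.ofReal_mul (Real.rpow_nonneg hk0.le _)]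
    · calc ∫⁻ x in (Set.Icc (-1:ℝ) 1)ᶜ, ENNReal.ofReal (min ((k ^ 2 * x ^ 2)) 1) ∂Λ
          ≤ ∫⁻ _ in (Set.Icc (-1:ℝ) 1)ᶜ, 1 ∂Λ := by
            apply lintegral_mono
            intro x
            exact ENNReal.ofReal_le_one.mpr (min_le_right _ _)
        _ = C₂ := by rw [setLIntegral_one, hC₂def]
  -- assemble
  set s : ℝ := 1/p + 1 with hsdef
  set C : ℝ := 2 * p⁻¹ * Real.Gamma s with hCdef
  have hmain : ∀ n : ℕ,
      ENNReal.ofReal (yuleSimonPMF p (n + 1)) *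
        (∫⁻ x : ℝ, ENNReal.ofReal (min ((((n : ℝ) + 1) ^ 2 * x ^ 2)) 1) ∂Λ) ≤
      ENNReal.ofReal (C * ((n:ℝ) + 1) ^ (q - s)) * C₁ +
        ENNReal.ofReal (C * ((n:ℝ) + 1) ^ (-s)) * C₂ := by
    intro n
    have hk0 : (0:ℝ) < (n:ℝ) + 1 := by positivity
    have hb1 : ENNReal.ofReal (yuleSimonPMF p (n + 1)) ≤
        ENNReal.ofReal (C * ((n:ℝ) + 1) ^ (-s)) := by
      apply ENNReal.ofReal_le_ofReal
      have := yuleSimon_bound p hp0 n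
      rw [hCdef, hsdef]
      linarith [this]
    calc ENNReal.ofReal (yuleSimonPMF p (n + 1)) *
        (∫⁻ x : ℝ, ENNReal.ofReal (min ((((n : ℝ) + 1) ^ 2 * x ^ 2)) 1) ∂Λ)
        ≤ ENNReal.ofReal (C * ((n:ℝ) + 1) ^ (-s)) *
          (ENNReal.ofReal (((n:ℝ) + 1) ^ q) * C₁ + C₂) := mul_le_mul' hb1 (hInt n)
      _ = ENNReal.ofReal (C * ((n:ℝ) + 1) ^ (-s)) * ENNReal.ofReal (((n:ℝ) + 1) ^ q) * C₁ +
          ENNReal.ofReal (C * ((n:ℝ) + 1) ^ (-s)) * C₂ := by ring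
      _ = ENNReal.ofReal (C * ((n:ℝ) + 1) ^ (q - s)) * C₁ +
          ENNReal.ofReal (C * ((n:ℝ) + 1) ^ (-s)) * C₂ := by
          congr 2
          rw [← ENNReal.ofReal_mul (by positivity : (0:ℝ) ≤ C * ((n:ℝ) + 1) ^ (-s))]
          congr 1
          rw [mul_assoc, ← Real.rpow_add hk0]
          ring_nf
  have hs1 : 1 < 1/p := by
    rw [lt_div_iff₀ hp0]; linarith
  have hsum1 : ∑' n : ℕ, ENNReal.ofReal (C * ((n:ℝ) + 1) ^ (q - s)) < ⊤ :=
    tsum_ofReal_rpow_lt_top C (q - s) (by rw [hsdef]; linarith)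
  have hsum2 : ∑' n : ℕ, ENNReal.ofReal (C * ((n:ℝ) + 1) ^ (-s)) < ⊤ :=
    tsum_ofReal_rpow_lt_top C (-s) (by rw [hsdef]; linarith)
  calc ∑' n : ℕ, ENNReal.ofReal (yuleSimonPMF p (n + 1)) *
      ∫⁻ x : ℝ, ENNReal.ofReal (min ((((n : ℝ) + 1) ^ 2 * x ^ 2)) 1) ∂Λ
      ≤ ∑' n : ℕ, (ENNReal.ofReal (C * ((n:ℝ) + 1) ^ (q - s)) * C₁ +
          ENNReal.ofReal (C * ((n:ℝ) + 1) ^ (-s)) * C₂) := ENNReal.tsum_le_tsum hmain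
    _ = (∑' n : ℕ, ENNReal.ofReal (C * ((n:ℝ) + 1) ^ (q - s))) * C₁ +
        (∑' n : ℕ, ENNReal.ofReal (C * ((n:ℝ) + 1) ^ (-s))) * C₂ := by
        rw [ENNReal.tsum_add, ENNReal.tsum_mul_right, ENNReal.tsum_mul_right]
    _ < ⊤ := by
        apply ENNReal.add_lt_top.mpr
        constructor
        · exact ENNReal.mul_lt_top hsum1 hC₁
        · exact ENNReal.mul_lt_top hsum2 hC₂
end

section
/- Let p ∈ (0,1) and let Λ be a Lévy measure on ℝ whose Blumenthal–Getoor index satisfies β(Λ) > 1/p. Then ∑_{k=1}^∞ p^{-1} B(k, 1/p + 1) ∫_ℝ min(k²x², 1) Λ(dx) = ∞. -/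
open MeasureTheory

/-- `Γ(x + m) ≤ Γ(x) (x+m)^m` for `x ≥ 1`. -/
lemma gamma_add_nat_le (m : ℕ) (x : ℝ) (hx : 1 ≤ x) :
    Real.Gamma (x + m) ≤ Real.Gamma x * (x + m) ^ m := by
  induction m with
  | zero => simp
  | succ m ih =>
    have hxm : (0:ℝ) < x + m := by positivity
    have h1 : Real.Gamma (x + (m + 1 : ℕ)) = (x + m) * Real.Gamma (x + m) := by
      have : (x + (m + 1 : ℕ) : ℝ) = (x + m) + 1 := by push_cast; ring
      rw [this, Real.Gamma_add_one (ne_of_gt hxm)]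
    have hΓ : 0 ≤ Real.Gamma x := (Real.Gamma_pos_of_pos (by linarith)).le
    have h2 : (x + m) * Real.Gamma (x + m) ≤ (x + m) * (Real.Gamma x * (x + m) ^ m) :=
      mul_le_mul_of_nonneg_left ih hxm.le
    have h3 : (x + m) * (Real.Gamma x * (x + m) ^ m) = Real.Gamma x * (x + m) ^ (m + 1) := by
      ring
    have h4 : Real.Gamma x * (x + m) ^ (m + 1) ≤ Real.Gamma x * (x + (m + 1 : ℕ)) ^ (m + 1) := by
      apply mul_le_mul_of_nonneg_left _ hΓ
      apply pow_le_pow_left₀ hxm.le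
      push_cast; linarith
    calc Real.Gamma (x + (m + 1 : ℕ)) = (x + m) * Real.Gamma (x + m) := h1
      _ ≤ (x + m) * (Real.Gamma x * (x + m) ^ m) := h2
      _ = Real.Gamma x * (x + m) ^ (m + 1) := h3
      _ ≤ Real.Gamma x * (x + (m + 1 : ℕ)) ^ (m + 1) := h4

/-- Gautschi-type inequality via log-convexity: `Γ(x+θ) ≤ Γ(x) x^θ` for `x ≥ 1`, `θ ∈ [0,1]`. -/
lemma gamma_gautschi (x θ : ℝ) (hx : 1 ≤ x) (h0 : 0 ≤ θ) (h1 : θ ≤ 1) :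
    Real.Gamma (x + θ) ≤ Real.Gamma x * x ^ θ := by
  have hxpos : (0:ℝ) < x := by linarith
  have hΓx : 0 < Real.Gamma x := Real.Gamma_pos_of_pos hxpos
  have hΓx1 : 0 < Real.Gamma (x + 1) := Real.Gamma_pos_of_pos (by linarith)
  have hΓxθ : 0 < Real.Gamma (x + θ) := Real.Gamma_pos_of_pos (by linarith)
  have hconv := Real.convexOn_log_Gamma.2 (Set.mem_Ioi.mpr hxpos)
    (Set.mem_Ioi.mpr (show (0:ℝ) < x + 1 by linarith)) (by linarith : 0 ≤ 1 - θ) h0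
    (by ring : (1 - θ) + θ = 1)
  have hpt : (1 - θ) • x + θ • (x + 1) = x + θ := by simp [smul_eq_mul]; ring
  rw [hpt] at hconv
  simp only [Function.comp_apply] at hconv
  -- hconv : log Γ(x+θ) ≤ (1-θ) * log Γ x + θ * log Γ (x+1)
  have key : Real.Gamma (x + θ) ≤ Real.Gamma x ^ (1 - θ) * Real.Gamma (x + 1) ^ θ := by
    have := Real.exp_le_exp.mpr hconv
    rw [Real.exp_log hΓxθ] at this
    calc Real.Gamma (x + θ)
        ≤ Real.exp ((1 - θ) • Real.log (Real.Gamma x) + θ • Real.log (Real.Gamma (x + 1))) := by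
          simpa using this
      _ = Real.Gamma x ^ (1 - θ) * Real.Gamma (x + 1) ^ θ := by
          rw [smul_eq_mul, smul_eq_mul, Real.exp_add,
            Real.rpow_def_of_pos hΓx, Real.rpow_def_of_pos hΓx1, mul_comm (1 - θ),
            mul_comm θ]
  have hG1 : Real.Gamma (x + 1) = x * Real.Gamma x := Real.Gamma_add_one (ne_of_gt hxpos)
  calc Real.Gamma (x + θ) ≤ Real.Gamma x ^ (1 - θ) * Real.Gamma (x + 1) ^ θ := key
    _ = Real.Gamma x ^ (1 - θ) * (x ^ θ * Real.Gamma x ^ θ) := by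
        rw [hG1, Real.mul_rpow hxpos.le hΓx.le]
    _ = (Real.Gamma x ^ (1 - θ) * Real.Gamma x ^ θ) * x ^ θ := by ring
    _ = Real.Gamma x * x ^ θ := by
        rw [← Real.rpow_add hΓx]; norm_num

/-- `Γ(k + s) ≤ Γ(k) ((⌊s⌋+1) k)^s` for natural `k ≥ 1` and real `s ≥ 1`. -/
lemma gamma_ratio (s : ℝ) (hs : 1 ≤ s) (k : ℕ) (hk : 1 ≤ k) :
    Real.Gamma ((k:ℝ) + s) ≤ Real.Gamma k * (((⌊s⌋₊ : ℝ) + 1) * k) ^ s := by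
  set m : ℕ := ⌊s⌋₊ with hm
  have hs0 : (0:ℝ) ≤ s := by linarith
  have hmles : (m:ℝ) ≤ s := Nat.floor_le hs0
  have hslt : s < (m:ℝ) + 1 := Nat.lt_floor_add_one s
  set θ : ℝ := s - m with hθ
  have hθ0 : 0 ≤ θ := by simp [hθ]; linarith
  have hθ1 : θ ≤ 1 := by simp [hθ]; linarith
  have hk1 : (1:ℝ) ≤ (k:ℝ) := by exact_mod_cast hk
  have hx1 : (1:ℝ) ≤ (k:ℝ) + m := le_add_of_le_of_nonneg hk1 (Nat.cast_nonneg m)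
  have hxpos : (0:ℝ) < (k:ℝ) + m := by linarith
  have hΓk : 0 ≤ Real.Gamma k := (Real.Gamma_pos_of_pos (by linarith)).le
  have harg : (k:ℝ) + s = ((k:ℝ) + m) + θ := by simp [hθ]
  have step1 : Real.Gamma ((k:ℝ) + s) ≤ Real.Gamma ((k:ℝ) + m) * ((k:ℝ) + m) ^ θ := by
    rw [harg]; exact gamma_gautschi _ _ hx1 hθ0 hθ1
  have step2 : Real.Gamma ((k:ℝ) + m) * ((k:ℝ) + m) ^ θ
      ≤ (Real.Gamma k * ((k:ℝ) + m) ^ m) * ((k:ℝ) + m) ^ θ :=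
    mul_le_mul_of_nonneg_right (gamma_add_nat_le m k hk1)
      (Real.rpow_nonneg hxpos.le θ)
  have step3 : (Real.Gamma k * ((k:ℝ) + m) ^ m) * ((k:ℝ) + m) ^ θ
      = Real.Gamma k * ((k:ℝ) + m) ^ s := by
    have hms : (m:ℝ) + θ = s := by simp [hθ]
    rw [mul_assoc, ← Real.rpow_natCast ((k:ℝ) + m) m, ← Real.rpow_add hxpos, hms]
  have hbase : (k:ℝ) + m ≤ ((m:ℝ) + 1) * k := by
    have : (m:ℝ) * 1 ≤ (m:ℝ) * k := mul_le_mul_of_nonneg_left hk1 (Nat.cast_nonneg m)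
    nlinarith
  have step4 : Real.Gamma k * ((k:ℝ) + m) ^ s
      ≤ Real.Gamma k * (((m:ℝ) + 1) * k) ^ s :=
    mul_le_mul_of_nonneg_left (Real.rpow_le_rpow hxpos.le hbase hs0) hΓk
  linarith


/-- Pointwise lower bound: for `|x| ≤ 1`,
`c·|x|^q ≤ ∑_n (n+1)^{-(q+1)} min((n+1)²x², 1)`. -/
lemma pointwise_bound (q : ℝ) (hq : 1 ≤ q) (x : ℝ) (hx : |x| ≤ 1) :
    ENNReal.ofReal ((2:ℝ) ^ (-(q+1)) * (2:ℝ) ^ (-q) * |x| ^ q) ≤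
      ∑' n : ℕ, ENNReal.ofReal (((n:ℝ) + 1) ^ (-(q+1))) *
        ENNReal.ofReal (min (((n:ℝ) + 1) ^ 2 * x ^ 2) 1) := by
  rcases eq_or_ne x 0 with rfl | hx0
  · simp [Real.zero_rpow (by linarith : q ≠ 0)]
  have hax : 0 < |x| := abs_pos.mpr hx0
  have hinvpos : 0 < 1 / |x| := by positivity
  set K : ℕ := ⌈1 / |x|⌉₊ with hKdef
  have hKge : 1 / |x| ≤ (K:ℝ) := Nat.le_ceil _
  have hKpos : (0:ℝ) < K := lt_of_lt_of_le hinvpos hKge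
  have hKnat : 1 ≤ K := by exact_mod_cast Nat.one_le_iff_ne_zero.mpr (by
    intro h; rw [h] at hKpos; norm_num at hKpos)
  have hone_div : (1:ℝ) ≤ 1 / |x| := by rw [le_div_iff₀ hax]; simpa using hx
  have hKle : (K:ℝ) ≤ 2 / |x| := by
    have h2 : (K:ℝ) < 1 / |x| + 1 := Nat.ceil_lt_add_one hinvpos.le
    have h3 : (2:ℝ) / |x| = 1 / |x| + 1 / |x| := by ring
    linarith
  have h1K : 1 ≤ (K:ℝ) * |x| := by rw [div_le_iff₀ hax] at hKge; linarith
  refine le_trans ?_ (ENNReal.sum_le_tsum (Finset.Ico K (2*K)))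
  have hcard : (Finset.Ico K (2*K)).card = K := by rw [Nat.card_Ico]; omega
  have hterm : ∀ n ∈ Finset.Ico K (2*K),
      ENNReal.ofReal ((2*(K:ℝ)) ^ (-(q+1))) ≤
        ENNReal.ofReal (((n:ℝ) + 1) ^ (-(q+1))) *
          ENNReal.ofReal (min (((n:ℝ) + 1) ^ 2 * x ^ 2) 1) := by
    intro n hn
    rw [Finset.mem_Ico] at hn
    have hcast1 : (K:ℝ) ≤ (n:ℝ) + 1 := by
      have : K ≤ n + 1 := by omega
      exact_mod_cast this
    have hcast2 : (n:ℝ) + 1 ≤ 2 * (K:ℝ) := by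
      have : n + 1 ≤ 2 * K := by omega
      exact_mod_cast this
    have hnabs : 1 ≤ ((n:ℝ) + 1) * |x| :=
      le_trans h1K (mul_le_mul_of_nonneg_right hcast1 hax.le)
    have hminone : min (((n:ℝ) + 1) ^ 2 * x ^ 2) 1 = 1 := by
      apply min_eq_right
      have hsq : ((n:ℝ) + 1) ^ 2 * x ^ 2 = (((n:ℝ) + 1) * |x|) ^ 2 := by
        rw [mul_pow, sq_abs]
      nlinarith
    rw [hminone, ENNReal.ofReal_one, mul_one]
    exact ENNReal.ofReal_le_ofReal
      (Real.rpow_le_rpow_of_nonpos (by positivity) hcast2 (by linarith))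
  have hreal : (2:ℝ) ^ (-(q+1)) * (2:ℝ) ^ (-q) * |x| ^ q ≤ (K:ℝ) * (2*(K:ℝ)) ^ (-(q+1)) := by
    have e1 : (2*(K:ℝ)) ^ (-(q+1)) = (2:ℝ) ^ (-(q+1)) * (K:ℝ) ^ (-(q+1)) :=
      Real.mul_rpow (by norm_num) hKpos.le
    have e2 : (K:ℝ) * (K:ℝ) ^ (-(q+1)) = (K:ℝ) ^ (-q) := by
      calc (K:ℝ) * (K:ℝ) ^ (-(q+1)) = (K:ℝ) ^ (1:ℝ) * (K:ℝ) ^ (-(q+1)) := by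
            rw [Real.rpow_one]
        _ = (K:ℝ) ^ (1 + -(q+1)) := (Real.rpow_add hKpos _ _).symm
        _ = (K:ℝ) ^ (-q) := by norm_num
    have h6 : ((2:ℝ) / |x|) ^ (-q) = (2:ℝ) ^ (-q) * |x| ^ q := by
      rw [Real.rpow_neg (by positivity), Real.div_rpow (by norm_num) (abs_nonneg x),
        inv_div, div_eq_mul_inv, ← Real.rpow_neg (by norm_num : (0:ℝ) ≤ 2), mul_comm]
    have h5 : ((2:ℝ) / |x|) ^ (-q) ≤ (K:ℝ) ^ (-q) :=
      Real.rpow_le_rpow_of_nonpos hKpos hKle (by linarith)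
    rw [h6] at h5
    calc (2:ℝ) ^ (-(q+1)) * (2:ℝ) ^ (-q) * |x| ^ q
        = (2:ℝ) ^ (-(q+1)) * ((2:ℝ) ^ (-q) * |x| ^ q) := by ring
      _ ≤ (2:ℝ) ^ (-(q+1)) * (K:ℝ) ^ (-q) := by
          apply mul_le_mul_of_nonneg_left h5 (by positivity)
      _ = (K:ℝ) * (2*(K:ℝ)) ^ (-(q+1)) := by rw [e1, ← e2]; ring
  calc ENNReal.ofReal ((2:ℝ) ^ (-(q+1)) * (2:ℝ) ^ (-q) * |x| ^ q)
      ≤ ENNReal.ofReal ((K:ℝ) * (2*(K:ℝ)) ^ (-(q+1))) := ENNReal.ofReal_le_ofReal hreal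
    _ = ENNReal.ofReal (K:ℝ) * ENNReal.ofReal ((2*(K:ℝ)) ^ (-(q+1))) :=
        ENNReal.ofReal_mul (Nat.cast_nonneg K)
    _ = (K:ENNReal) * ENNReal.ofReal ((2*(K:ℝ)) ^ (-(q+1))) := by rw [ENNReal.ofReal_natCast]
    _ = ∑ _n ∈ Finset.Ico K (2*K), ENNReal.ofReal ((2*(K:ℝ)) ^ (-(q+1))) := by
        rw [Finset.sum_const, hcard, nsmul_eq_mul]
    _ ≤ _ := Finset.sum_le_sum hterm

/-- Divergence half of Lemma 8.4 (ii): if `β(Λ) > 1/p` then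
`∑_{k≥1} f_p(k) ∫ min(k²x², 1) Λ(dx) = ∞`. -/
theorem nrlp_path_levy_measure_diverges
    (p : ℝ) (hp0 : 0 < p) (hp1 : p < 1)
    (Λ : Measure ℝ) (hΛ0 : Λ {0} = 0)
    (hΛint : ∫⁻ x : ℝ, ENNReal.ofReal (min (x ^ 2) 1) ∂Λ < ⊤)
    (hBG : 1 / p < bgIndex Λ) :
    ∑' n : ℕ, ENNReal.ofReal (yuleSimonPMF p (n + 1)) *
      ∫⁻ x : ℝ, ENNReal.ofReal (min ((((n : ℝ) + 1) ^ 2 * x ^ 2)) 1) ∂Λ = ⊤ := by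
  have hq0 : 0 < 1 / p := by positivity
  have hq1 : 1 < 1 / p := by rw [lt_div_iff₀ hp0]; linarith
  set s : ℝ := 1 / p + 1 with hs
  have hs1 : 1 ≤ s := by rw [hs]; linarith
  have hspos : 0 < s := by linarith
  -- Step A: the integral of |x|^(1/p) over [-1,1] diverges
  have hdiv : ∫⁻ x in Set.Icc (-1:ℝ) 1, ENNReal.ofReal (|x| ^ (1/p)) ∂Λ = ⊤ := by
    by_contra h
    have hmem : (1/p) ∈ {r : ℝ | 0 < r ∧
        ∫⁻ x in Set.Icc (-1:ℝ) 1, ENNReal.ofReal (|x| ^ r) ∂Λ < ⊤} := ⟨hq0, Ne.lt_top h⟩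
    have hle : bgIndex Λ ≤ 1/p := csInf_le ⟨0, fun r hr => hr.1.le⟩ hmem
    linarith
  -- Step B: lower bound on the Yule–Simon pmf
  set m : ℕ := ⌊s⌋₊ with hm
  set C : ℝ := p⁻¹ * Real.Gamma s * ((m:ℝ) + 1) ^ (-s) with hC
  have hCpos : 0 < C := by
    apply mul_pos (mul_pos (inv_pos.mpr hp0) (Real.Gamma_pos_of_pos hspos))
    exact Real.rpow_pos_of_pos (by positivity) _
  have hf : ∀ k : ℕ, 1 ≤ k → C * (k:ℝ) ^ (-s) ≤ yuleSimonPMF p k := by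
    intro k hk
    have hk1 : (1:ℝ) ≤ (k:ℝ) := by exact_mod_cast hk
    have hkpos : (0:ℝ) < k := by linarith
    have hΓk : 0 < Real.Gamma k := Real.Gamma_pos_of_pos hkpos
    have hΓs : 0 < Real.Gamma s := Real.Gamma_pos_of_pos hspos
    have hΓks : 0 < Real.Gamma ((k:ℝ) + s) := Real.Gamma_pos_of_pos (by linarith)
    have hBpos : (0:ℝ) < (((m:ℝ) + 1) * k) ^ s := Real.rpow_pos_of_pos (by positivity) _
    have hratio : Real.Gamma ((k:ℝ) + s) ≤ Real.Gamma k * (((m:ℝ) + 1) * k) ^ s :=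
      gamma_ratio s hs1 k hk
    unfold yuleSimonPMF
    rw [show (k:ℝ) + 1/p + 1 = (k:ℝ) + s by rw [hs]; ring,
      show (1:ℝ)/p + 1 = s from hs.symm]
    have key : Real.Gamma k * Real.Gamma s / (Real.Gamma k * (((m:ℝ) + 1) * k) ^ s)
        ≤ Real.Gamma k * Real.Gamma s / Real.Gamma ((k:ℝ) + s) := by
      gcongr
    have hmono := mul_le_mul_of_nonneg_left key (inv_pos.mpr hp0).le
    refine le_trans (le_of_eq ?_) hmono
    have hsplit : (((m:ℝ) + 1) * k) ^ s = ((m:ℝ) + 1) ^ s * (k:ℝ) ^ s :=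
      Real.mul_rpow (by positivity) (by positivity)
    rw [hC, mul_div_mul_left _ _ (ne_of_gt hΓk), hsplit, div_eq_mul_inv, mul_inv,
      Real.rpow_neg (by positivity : (0:ℝ) ≤ (m:ℝ) + 1), Real.rpow_neg (Nat.cast_nonneg k)]
    ring
  -- the candidate integrals
  have hmeas : ∀ n : ℕ, Measurable (fun x : ℝ =>
      ENNReal.ofReal (min (((n:ℝ) + 1) ^ 2 * x ^ 2) 1)) := by
    intro n
    exact (((measurable_id.pow_const 2).const_mul _).min measurable_const).ennreal_ofReal
  -- Step C–F: divergence of the weighted sum of truncated integrals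
  have hkey : ∑' n : ℕ, ENNReal.ofReal (((n:ℝ) + 1) ^ (-s)) *
      ∫⁻ x in Set.Icc (-1:ℝ) 1, ENNReal.ofReal (min (((n:ℝ) + 1) ^ 2 * x ^ 2) 1) ∂Λ = ⊤ := by
    have heq : ∀ n : ℕ, ENNReal.ofReal (((n:ℝ) + 1) ^ (-s)) *
        ∫⁻ x in Set.Icc (-1:ℝ) 1, ENNReal.ofReal (min (((n:ℝ) + 1) ^ 2 * x ^ 2) 1) ∂Λ
        = ∫⁻ x in Set.Icc (-1:ℝ) 1, ENNReal.ofReal (((n:ℝ) + 1) ^ (-s)) *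
            ENNReal.ofReal (min (((n:ℝ) + 1) ^ 2 * x ^ 2) 1) ∂Λ :=
      fun n => (lintegral_const_mul _ (hmeas n)).symm
    rw [tsum_congr heq, ← lintegral_tsum (fun n => ((hmeas n).const_mul _).aemeasurable)]
    have hc2 : (0:ℝ) < (2:ℝ) ^ (-s) * (2:ℝ) ^ (-(1/p)) := by positivity
    refine top_le_iff.mp ?_
    calc (⊤:ENNReal)
        = ENNReal.ofReal ((2:ℝ) ^ (-s) * (2:ℝ) ^ (-(1/p))) *
            ∫⁻ x in Set.Icc (-1:ℝ) 1, ENNReal.ofReal (|x| ^ (1/p)) ∂Λ := by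
          rw [hdiv, ENNReal.mul_top (by simpa using hc2 : ENNReal.ofReal _ ≠ 0)]
      _ = ∫⁻ x in Set.Icc (-1:ℝ) 1, ENNReal.ofReal ((2:ℝ) ^ (-s) * (2:ℝ) ^ (-(1/p))) *
            ENNReal.ofReal (|x| ^ (1/p)) ∂Λ := by
          rw [lintegral_const_mul]
          exact ((Real.continuous_rpow_const hq0.le).comp continuous_abs).measurable.ennreal_ofReal
      _ ≤ ∫⁻ x in Set.Icc (-1:ℝ) 1, ∑' n : ℕ, ENNReal.ofReal (((n:ℝ) + 1) ^ (-s)) *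
            ENNReal.ofReal (min (((n:ℝ) + 1) ^ 2 * x ^ 2) 1) ∂Λ := by
          apply setLIntegral_mono' measurableSet_Icc
          intro x hxmem
          have hxabs : |x| ≤ 1 := abs_le.mpr ⟨hxmem.1, hxmem.2⟩
          have hpb := pointwise_bound (1/p) hq1.le x hxabs
          rw [show -(1/p + 1) = -s by rw [hs]] at hpb
          refine le_trans (le_of_eq ?_) hpb
          rw [← ENNReal.ofReal_mul (by positivity), hs]
      _ = _ := rfl
  -- Conclusion
  refine top_le_iff.mp ?_
  have hle : ∑' n : ℕ, ENNReal.ofReal C * (ENNReal.ofReal (((n:ℝ) + 1) ^ (-s)) *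
      ∫⁻ x in Set.Icc (-1:ℝ) 1, ENNReal.ofReal (min (((n:ℝ) + 1) ^ 2 * x ^ 2) 1) ∂Λ)
      ≤ ∑' n : ℕ, ENNReal.ofReal (yuleSimonPMF p (n + 1)) *
        ∫⁻ x : ℝ, ENNReal.ofReal (min ((((n : ℝ) + 1) ^ 2 * x ^ 2)) 1) ∂Λ := by
    apply ENNReal.tsum_le_tsum
    intro n
    have h2 : C * ((n:ℝ) + 1) ^ (-s) ≤ yuleSimonPMF p (n + 1) := by
      have := hf (n + 1) (by omega)
      push_cast at this
      exact this
    calc ENNReal.ofReal C * (ENNReal.ofReal (((n:ℝ) + 1) ^ (-s)) *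
          ∫⁻ x in Set.Icc (-1:ℝ) 1, ENNReal.ofReal (min (((n:ℝ) + 1) ^ 2 * x ^ 2) 1) ∂Λ)
        = ENNReal.ofReal (C * ((n:ℝ) + 1) ^ (-s)) *
          ∫⁻ x in Set.Icc (-1:ℝ) 1, ENNReal.ofReal (min (((n:ℝ) + 1) ^ 2 * x ^ 2) 1) ∂Λ := by
          rw [← mul_assoc, ← ENNReal.ofReal_mul hCpos.le]
      _ ≤ ENNReal.ofReal (yuleSimonPMF p (n + 1)) *
          ∫⁻ x : ℝ, ENNReal.ofReal (min ((((n : ℝ) + 1) ^ 2 * x ^ 2)) 1) ∂Λ :=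
          mul_le_mul' (ENNReal.ofReal_le_ofReal h2) (setLIntegral_le_lintegral _ _)
  refine le_trans (le_of_eq ?_) hle
  rw [ENNReal.tsum_mul_left, hkey, ENNReal.mul_top
    (by simpa using hCpos : ENNReal.ofReal C ≠ 0)]
end

section
/- Let p ∈ (0,1/2) and set a_n := Γ(n)/Γ(n+p) for n ≥ 1. Then lim_{n→∞} n^{2p−1} ∑_{k=1}^n a_k² = 1/(1−2p). -/
open Filter Real Finset Asymptotics Topology

private lemma gamma_rpow_ineq {x y a b : ℝ} (hx : 0 < x) (hy : 0 < y)
    (ha : 0 ≤ a) (hb : 0 ≤ b) (hab : a + b = 1) :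
    Real.Gamma (a * x + b * y) ≤ Real.Gamma x ^ a * Real.Gamma y ^ b := by
  have hcomb : 0 < a * x + b * y := by
    rcases eq_or_lt_of_le ha with h | h
    · have hb1 : b = 1 := by linarith
      rw [← h, hb1]; linarith
    · have := mul_nonneg hb hy.le
      nlinarith
  have h := Real.convexOn_log_Gamma.2 (Set.mem_Ioi.2 hx) (Set.mem_Ioi.2 hy) ha hb hab
  simp only [Function.comp_apply, smul_eq_mul] at h
  have hgx := Real.Gamma_pos_of_pos hx
  have hgy := Real.Gamma_pos_of_pos hy
  have hgc := Real.Gamma_pos_of_pos hcomb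
  calc Real.Gamma (a*x+b*y) = Real.exp (Real.log (Real.Gamma (a*x+b*y))) :=
        (Real.exp_log hgc).symm
    _ ≤ Real.exp (a * Real.log (Real.Gamma x) + b * Real.log (Real.Gamma y)) :=
        Real.exp_le_exp.2 h
    _ = Real.Gamma x ^ a * Real.Gamma y ^ b := by
        rw [Real.rpow_def_of_pos hgx, Real.rpow_def_of_pos hgy, ← Real.exp_add]
        ring_nf

private lemma gautschi_lower {p x : ℝ} (hp0 : 0 < p) (hp1 : p < 1) (hx : 0 < x) :
    Real.Gamma (x + p) ≤ Real.Gamma x * x ^ p := by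
  have h := gamma_rpow_ineq hx (by linarith : (0:ℝ) < x + 1)
    (by linarith : (0:ℝ) ≤ 1 - p) hp0.le (by ring)
  rw [show (1-p) * x + p * (x+1) = x + p by ring, Real.Gamma_add_one hx.ne'] at h
  have hgx := Real.Gamma_pos_of_pos hx
  calc Real.Gamma (x+p) ≤ Real.Gamma x ^ (1-p) * (x * Real.Gamma x) ^ p := h
    _ = Real.Gamma x * x ^ p := by
        rw [Real.mul_rpow hx.le hgx.le,
          show Real.Gamma x ^ (1-p) * (x ^ p * Real.Gamma x ^ p)
            = (Real.Gamma x ^ (1-p) * Real.Gamma x ^ p) * x ^ p by ring,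
          ← Real.rpow_add hgx]
        norm_num

private lemma gautschi_upper {p x : ℝ} (hp0 : 0 < p) (hp1 : p < 1) (hx : 0 < x) :
    x * Real.Gamma x ≤ Real.Gamma (x + p) * (x + p) ^ (1 - p) := by
  have hxp : (0:ℝ) < x + p := by linarith
  have h := gamma_rpow_ineq hxp (by linarith : (0:ℝ) < x + p + 1)
    hp0.le (by linarith : (0:ℝ) ≤ 1 - p) (by ring)
  rw [show p * (x+p) + (1-p) * (x+p+1) = (x+1) + p - p by ring] at h
  rw [show (x+1) + p - p = x + 1 by ring, Real.Gamma_add_one hx.ne',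
    Real.Gamma_add_one hxp.ne'] at h
  have hgxp := Real.Gamma_pos_of_pos hxp
  calc x * Real.Gamma x ≤ Real.Gamma (x+p) ^ p * ((x+p) * Real.Gamma (x+p)) ^ (1-p) := h
    _ = Real.Gamma (x+p) * (x+p) ^ (1-p) := by
        rw [Real.mul_rpow hxp.le hgxp.le,
          show Real.Gamma (x+p) ^ p * ((x+p) ^ (1-p) * Real.Gamma (x+p) ^ (1-p))
            = (Real.Gamma (x+p) ^ p * Real.Gamma (x+p) ^ (1-p)) * (x+p) ^ (1-p) by ring,
          ← Real.rpow_add hgxp]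
        norm_num

private lemma ratio_tendsto {p : ℝ} (hp0 : 0 < p) (hp1 : p < 1) :
    Tendsto (fun n : ℕ => (n:ℝ) ^ p * (Real.Gamma n / Real.Gamma ((n:ℝ) + p)))
      atTop (𝓝 1) := by
  have hlow : ∀ᶠ n : ℕ in atTop,
      1 ≤ (n:ℝ)^p * (Real.Gamma n / Real.Gamma ((n:ℝ)+p)) := by
    filter_upwards [eventually_ge_atTop 1] with n hn
    have hx : (0:ℝ) < (n:ℝ) := by exact_mod_cast hn
    have hΓ := Real.Gamma_pos_of_pos (by linarith : (0:ℝ) < (n:ℝ)+p)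
    rw [show (n:ℝ)^p * (Real.Gamma n / Real.Gamma ((n:ℝ)+p))
        = (Real.Gamma n * (n:ℝ)^p) / Real.Gamma ((n:ℝ)+p) by ring,
      le_div_iff₀ hΓ, one_mul]
    exact gautschi_lower hp0 hp1 hx
  have hupp : ∀ᶠ n : ℕ in atTop,
      (n:ℝ)^p * (Real.Gamma n / Real.Gamma ((n:ℝ)+p)) ≤ (((n:ℝ)+p)/n)^(1-p) := by
    filter_upwards [eventually_ge_atTop 1] with n hn
    have hx : (0:ℝ) < (n:ℝ) := by exact_mod_cast hn
    have hΓ := Real.Gamma_pos_of_pos (by linarith : (0:ℝ) < (n:ℝ)+p)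
    have hxx : (n:ℝ)^p * (n:ℝ)^(1-p) = (n:ℝ) := by
      rw [← Real.rpow_add hx]; norm_num
    rw [Real.div_rpow (by linarith) hx.le,
      show (n:ℝ)^p * (Real.Gamma n / Real.Gamma ((n:ℝ)+p))
        = ((n:ℝ)^p * Real.Gamma n) / Real.Gamma ((n:ℝ)+p) by ring,
      div_le_div_iff₀ hΓ (Real.rpow_pos_of_pos hx _)]
    calc (n:ℝ)^p * Real.Gamma n * (n:ℝ)^(1-p)
        = ((n:ℝ)^p * (n:ℝ)^(1-p)) * Real.Gamma n := by ring
      _ = (n:ℝ) * Real.Gamma n := by rw [hxx]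
      _ ≤ Real.Gamma ((n:ℝ)+p) * ((n:ℝ)+p)^(1-p) := gautschi_upper hp0 hp1 hx
      _ = ((n:ℝ)+p)^(1-p) * Real.Gamma ((n:ℝ)+p) := mul_comm _ _
  have h1 : Tendsto (fun n:ℕ => ((n:ℝ)+p)/n) atTop (𝓝 1) := by
    have h := tendsto_const_nhds (x := (1:ℝ)) (f := atTop (α := ℕ)) |>.add
      (tendsto_one_div_atTop_nhds_zero_nat.const_mul p)
    rw [mul_zero, add_zero] at h
    apply h.congr'
    filter_upwards [eventually_ge_atTop 1] with n hn
    have hx : (0:ℝ) < (n:ℝ) := by exact_mod_cast hn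
    field_simp
  have h2 := h1.rpow_const (p := 1-p) (Or.inl one_ne_zero)
  rw [Real.one_rpow] at h2
  exact tendsto_of_tendsto_of_tendsto_of_le_of_le' tendsto_const_nhds h2 hlow hupp

private lemma sum_rpow_tendsto {p : ℝ} (hp0 : 0 < p) (hp2 : p < 1/2) :
    Tendsto (fun n : ℕ => (n:ℝ)^(2*p-1) * ∑ k ∈ Finset.Icc 1 n, (k:ℝ)^(-(2*p)))
      atTop (𝓝 (1/(1-2*p))) := by
  have hs : 0 < 1 - 2*p := by linarith
  have hant : ∀ n : ℕ, AntitoneOn (fun x:ℝ => x^(-(2*p))) (Set.Icc 1 (1+(n:ℝ))) := by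
    intro n
    exact (Real.antitoneOn_rpow_Ioi_of_exponent_nonpos (by linarith)).mono
      (fun x hx => Set.mem_Ioi.2 (lt_of_lt_of_le one_pos hx.1))
  have hI : ∀ n : ℕ, (∫ x in (1:ℝ)..(1+(n:ℝ)), x^(-(2*p)))
      = ((1+(n:ℝ))^(1-2*p) - 1)/(1-2*p) := by
    intro n
    rw [integral_rpow (Or.inl (by linarith : (-1:ℝ) < -(2*p)))]
    rw [show -(2*p)+1 = 1-2*p by ring, Real.one_rpow]
  have hsum : ∀ n : ℕ, (∑ k ∈ Finset.Icc 1 n, (k:ℝ)^(-(2*p)))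
      = ∑ i ∈ Finset.range n, ((1:ℝ)+(i:ℝ))^(-(2*p)) := by
    intro n
    rw [← Finset.Ico_add_one_right_eq_Icc, Finset.sum_Ico_eq_sum_range]
    simp only [Nat.add_sub_cancel]
    refine Finset.sum_congr rfl fun i _ => ?_
    push_cast; ring_nf
  have hlow : ∀ n : ℕ, (∫ x in (1:ℝ)..(1+(n:ℝ)), x^(-(2*p)))
      ≤ ∑ k ∈ Finset.Icc 1 n, (k:ℝ)^(-(2*p)) := by
    intro n
    rw [hsum n]
    exact (hant n).integral_le_sum
  have hupp : ∀ n : ℕ, (∑ k ∈ Finset.Icc 1 n, (k:ℝ)^(-(2*p)))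
      ≤ 1 + ∫ x in (1:ℝ)..(1+(n:ℝ)), x^(-(2*p)) := by
    intro n
    have h2 := (hant n).sum_le_integral
    rw [hsum n]
    cases n with
    | zero => simp [hI 0]
    | succ m =>
      rw [Finset.sum_range_succ']
      have hle : (∑ i ∈ Finset.range m, ((1:ℝ)+((i+1:ℕ):ℝ))^(-(2*p)))
          ≤ ∑ i ∈ Finset.range (m+1), ((1:ℝ)+((i+1:ℕ):ℝ))^(-(2*p)) :=
        Finset.sum_le_sum_of_subset_of_nonneg
          (Finset.range_subset_range.2 (Nat.le_succ m))
          (fun i _ _ => Real.rpow_nonneg (by positivity) _)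
      have e2 : ((1:ℝ)+((0:ℕ):ℝ))^(-(2*p)) = 1 := by norm_num
      rw [e2]
      calc (∑ i ∈ Finset.range m, ((1:ℝ)+((i+1:ℕ):ℝ))^(-(2*p))) + 1
          ≤ (∑ i ∈ Finset.range (m+1), ((1:ℝ)+((i+1:ℕ):ℝ))^(-(2*p))) + 1 := by
            linarith [hle]
        _ ≤ (∫ x in (1:ℝ)..(1+((m+1:ℕ):ℝ)), x^(-(2*p))) + 1 := by
            exact add_le_add_left h2 1
        _ = 1 + ∫ x in (1:ℝ)..(1+((m+1:ℕ):ℝ)), x^(-(2*p)) := by ring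
  -- limits
  have hB : Tendsto (fun n : ℕ => (n:ℝ)^(2*p-1)) atTop (𝓝 0) := by
    have h := (tendsto_rpow_neg_atTop hs).comp
      (tendsto_natCast_atTop_atTop (R := ℝ))
    exact h.congr (fun n => by simp only [Function.comp_apply]; congr 1; ring)
  have hA : Tendsto (fun n : ℕ => (n:ℝ)^(2*p-1) * (1+(n:ℝ))^(1-2*p)) atTop (𝓝 1) := by
    have h1 : Tendsto (fun n:ℕ => (1+(n:ℝ))/n) atTop (𝓝 1) := by
      have h := tendsto_const_nhds (x := (1:ℝ)) (f := atTop (α := ℕ)) |>.add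
        tendsto_one_div_atTop_nhds_zero_nat
      rw [add_zero] at h
      apply h.congr'
      filter_upwards [eventually_ge_atTop 1] with n hn
      have hx : (0:ℝ) < (n:ℝ) := by exact_mod_cast hn
      field_simp; ring
    have h2 := h1.rpow_const (p := 1-2*p) (Or.inl one_ne_zero)
    rw [Real.one_rpow] at h2
    apply h2.congr'
    filter_upwards [eventually_ge_atTop 1] with n hn
    have hx : (0:ℝ) < (n:ℝ) := by exact_mod_cast hn
    rw [Real.div_rpow (by linarith) hx.le, div_eq_mul_inv, ← Real.rpow_neg hx.le,
      show -(1-2*p) = 2*p-1 by ring]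
    ring
  have hlowT : Tendsto (fun n : ℕ => (n:ℝ)^(2*p-1) * ∫ x in (1:ℝ)..(1+(n:ℝ)), x^(-(2*p)))
      atTop (𝓝 (1/(1-2*p))) := by
    have h := (hA.sub hB).div_const (1-2*p)
    rw [show ((1:ℝ)-0)/(1-2*p) = 1/(1-2*p) by ring] at h
    apply h.congr
    intro n
    rw [hI n]; ring
  have huppT : Tendsto (fun n : ℕ => (n:ℝ)^(2*p-1) * (1 + ∫ x in (1:ℝ)..(1+(n:ℝ)), x^(-(2*p))))
      atTop (𝓝 (1/(1-2*p))) := by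
    have h := hB.add hlowT
    rw [zero_add] at h
    apply h.congr
    intro n; ring
  refine tendsto_of_tendsto_of_tendsto_of_le_of_le hlowT huppT (fun n => ?_) (fun n => ?_)
  · exact mul_le_mul_of_nonneg_left (hlow n) (Real.rpow_nonneg (Nat.cast_nonneg n) _)
  · exact mul_le_mul_of_nonneg_left (hupp n) (Real.rpow_nonneg (Nat.cast_nonneg n) _)

private noncomputable def bercuB (p : ℝ) (k : ℕ) : ℝ :=
  (Real.Gamma k / Real.Gamma ((k : ℝ) + p)) ^ 2

private noncomputable def bercuG (p : ℝ) (k : ℕ) : ℝ := (k : ℝ) ^ (-(2*p))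

/-- Bercu's asymptotic: for `p ∈ (0, 1/2)` and `aₙ = Γ(n)/Γ(n+p)`,
`n^{2p-1} ∑_{k=1}^n aₖ² → 1/(1-2p)` as `n → ∞`. Here `n^{2p-1}` is a real power. -/
theorem bercu_sum_asymptotic (p : ℝ) (hp0 : 0 < p) (hp2 : p < 1 / 2) :
    Filter.Tendsto
      (fun n : ℕ => (n : ℝ) ^ (2 * p - 1) *
        ∑ k ∈ Finset.Icc 1 n, (Real.Gamma k / Real.Gamma ((k : ℝ) + p)) ^ 2)
      Filter.atTop (nhds (1 / (1 - 2 * p))) := by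
  have hp1 : p < 1 := by linarith
  have hs : 0 < 1 - 2*p := by linarith
  show Tendsto (fun n : ℕ => (n : ℝ) ^ (2 * p - 1) * ∑ k ∈ Finset.Icc 1 n, bercuB p k)
      atTop (𝓝 (1 / (1 - 2 * p)))
  set F : ℕ → ℝ := fun k => bercuB p k - bercuG p k with hF
  have hg0 : ∀ i, 0 ≤ bercuG p i := fun i => Real.rpow_nonneg (Nat.cast_nonneg i) _
  have hgzero : bercuG p 0 = 0 := by
    simp only [bercuG, Nat.cast_zero]
    exact Real.zero_rpow (by linarith)
  have hFzero : F 0 = 0 := by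
    simp [hF, bercuB, hgzero, Real.Gamma_zero]
  -- the normalized ratio squared tends to 1
  have hr := ratio_tendsto hp0 hp1 (p := p)
  have hc : Tendsto (fun n : ℕ => ((n:ℝ)^p * (Real.Gamma n / Real.Gamma ((n:ℝ)+p)))^2)
      atTop (𝓝 1) := by simpa using hr.pow 2
  -- key identity
  have hkey : ∀ᶠ n : ℕ in atTop,
      F n = (((n:ℝ)^p * (Real.Gamma n / Real.Gamma ((n:ℝ)+p)))^2 - 1) * bercuG p n := by
    filter_upwards [eventually_ge_atTop 1] with n hn
    have hx : (0:ℝ) < n := by exact_mod_cast hn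
    have h1 : ((n:ℝ)^p)^2 * (n:ℝ)^(-(2*p)) = 1 := by
      rw [← Real.rpow_natCast ((n:ℝ)^p) 2, ← Real.rpow_mul hx.le, ← Real.rpow_add hx]
      push_cast
      rw [show p * 2 + -(2*p) = 0 by ring, Real.rpow_zero]
    simp only [hF, bercuB, bercuG]
    linear_combination (-(Real.Gamma n / Real.Gamma ((n:ℝ)+p))^2) * h1
  -- F = o(g)
  have hFo : F =o[atTop] bercuG p := by
    have h1 : (fun n : ℕ => ((n:ℝ)^p * (Real.Gamma n / Real.Gamma ((n:ℝ)+p)))^2 - 1)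
        =o[atTop] (fun _ : ℕ => (1:ℝ)) := by
      rw [Asymptotics.isLittleO_one_iff]
      simpa using hc.sub (tendsto_const_nhds (x := (1:ℝ)))
    have h2 := h1.mul_isBigO (isBigO_refl (bercuG p) atTop)
    refine h2.congr' (hkey.mono fun n hn => hn.symm) ?_
    filter_upwards with n
    simp
  -- sums over Icc vs range
  have hIccRange : ∀ (h : ℕ → ℝ), h 0 = 0 →
      ∀ n : ℕ, ∑ i ∈ Finset.range (n+1), h i = ∑ k ∈ Finset.Icc 1 n, h k := by
    intro h h0 n
    have e : Finset.range (n+1) = insert 0 (Finset.Icc 1 n) := by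
      ext k; simp [Nat.lt_succ_iff]; omega
    rw [e, Finset.sum_insert (by simp), h0, zero_add]
  -- the asymptotics of the g-sum
  have hsg : Tendsto (fun n : ℕ => (n:ℝ)^(2*p-1) * ∑ k ∈ Finset.Icc 1 n, bercuG p k)
      atTop (𝓝 (1/(1-2*p))) := sum_rpow_tendsto hp0 hp2
  -- divergence of range sums of g
  have hdvg : Tendsto (fun n : ℕ => ∑ i ∈ Finset.range n, bercuG p i) atTop atTop := by
    rw [← tendsto_add_atTop_iff_nat 1]
    apply Tendsto.congr (fun n => (hIccRange _ hgzero n).symm)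
    have hpow : Tendsto (fun n:ℕ => (n:ℝ)^(1-2*p)) atTop atTop :=
      (tendsto_rpow_atTop hs).comp tendsto_natCast_atTop_atTop
    have hmul := hsg.pos_mul_atTop (by positivity) hpow
    apply hmul.congr'
    filter_upwards [eventually_ge_atTop 1] with n hn
    have hx : (0:ℝ) < n := by exact_mod_cast hn
    have h1 : (n:ℝ)^(2*p-1) * (n:ℝ)^(1-2*p) = 1 := by
      rw [← Real.rpow_add hx]; norm_num
    linear_combination (∑ k ∈ Finset.Icc 1 n, bercuG p k) * h1
  -- sum of F is little-o of sum of g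
  have hsumF := hFo.sum_range hg0 hdvg
  have hsumF' : (fun n : ℕ => ∑ k ∈ Finset.Icc 1 n, F k)
      =o[atTop] (fun n : ℕ => ∑ k ∈ Finset.Icc 1 n, bercuG p k) := by
    have h := hsumF.comp_tendsto (tendsto_add_atTop_nat 1)
    refine h.congr' ?_ ?_
    · exact Filter.Eventually.of_forall fun n => hIccRange _ hFzero n
    · exact Filter.Eventually.of_forall fun n => hIccRange _ hgzero n
  have hratio := hsumF'.tendsto_div_nhds_zero
  have hzero : Tendsto (fun n : ℕ => (n:ℝ)^(2*p-1) * ∑ k ∈ Finset.Icc 1 n, F k)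
      atTop (𝓝 0) := by
    have h := hratio.mul hsg
    rw [zero_mul] at h
    apply h.congr'
    filter_upwards [eventually_ge_atTop 1] with n hn
    have hgpos : 0 < ∑ k ∈ Finset.Icc 1 n, bercuG p k := by
      have h1 : bercuG p 1 = 1 := by
        simp only [bercuG, Nat.cast_one]; exact Real.one_rpow _
      have h2 : bercuG p 1 ≤ ∑ k ∈ Finset.Icc 1 n, bercuG p k :=
        Finset.single_le_sum (fun i _ => hg0 i) (Finset.mem_Icc.2 ⟨le_refl 1, hn⟩)
      linarith
    field_simp
  -- conclude
  have hfinal := hsg.add hzero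
  rw [add_zero] at hfinal
  apply hfinal.congr
  intro n
  simp only [hF, Finset.sum_sub_distrib]
  ring
end
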